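/- arXiv:2405.13387 — 4 statements merged into one kernel-verified Lean document; each statement's English description precedes it below -/
import Mathlib

section
/- Let ν be a compactly supported Borel probability measure on ℝ^d whose Lebesgue decomposition has a nonzero absolutely continuous part with respect to Lebesgue measure. Then the n-th quantization error of order r = −d satisfies e_{n,−d}(ν) = 0 for every n ∈ ℕ. -/
open MeasureTheory Filter Set Metric
open scoped ENNReal NNReal Topology Classical

noncomputable section

/-- `ℝ^d`, modelled as `Fin d → ℝ` and carrying the maximum norm. -/
abbrev Ed (d : ℕ) := Fin d → ℝ

/-- The half-open unit cube `𝒬 = (0,1]^d`. -/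
def Qcube (d : ℕ) : Set (Ed d) := {x | ∀ i, x i ∈ Set.Ioc (0:ℝ) 1}

/-- The half-open dyadic cube of generation `n` with index `k ∈ ℤ^d`. -/
def dyadicCube (d n : ℕ) (k : Fin d → ℤ) : Set (Ed d) :=
  {x | ∀ i, x i ∈ Set.Ioc ((k i : ℝ) / 2 ^ n) (((k i : ℝ) + 1) / 2 ^ n)}

/-- The family `𝒟_n` of dyadic cubes of generation `n`, forming a partition of `𝒬`. -/
def Dn (d n : ℕ) : Set (Set (Ed d)) :=
  {S | ∃ k : Fin d → ℤ, (∀ i, 0 ≤ k i ∧ k i < 2 ^ n) ∧ S = dyadicCube d n k}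

/-- All dyadic cubes `𝒟 = ⋃_n 𝒟_n` (inside `𝒬`). -/
def Ddy (d : ℕ) : Set (Set (Ed d)) := ⋃ n, Dn d n

/-- All dyadic cubes of generation `n` in `ℝ^d`. -/
def DnAll (d n : ℕ) : Set (Set (Ed d)) := {S | ∃ k : Fin d → ℤ, S = dyadicCube d n k}

/-- Index set enumerating the cubes of `𝒟_n`. -/
def idx (d n : ℕ) : Finset (Fin d → ℤ) :=
  Fintype.piFinset fun _ => Finset.Icc 0 (2 ^ n - 1)

/-- Lebesgue measure restricted to `𝒬`. -/
def Lam (d : ℕ) : Measure (Ed d) := volume.restrict (Qcube d)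

/-- `dim_∞(ν) = liminf_n max_{Q ∈ 𝒟_n} log ν(Q) / log 2^{-n}`. -/
def dimInfty (d : ℕ) (ν : Measure (Ed d)) : ℝ :=
  liminf (fun n : ℕ =>
    (⨆ k ∈ idx d n, Real.log (ν (dyadicCube d n k)).toReal) / (-(n : ℝ) * Real.log 2)) atTop

/-- The set function `J_{ν,r}(Q) = max_{Q' ∈ 𝒟(Q)} ν(Q') Λ(Q')^{r/d}`. -/
def Jf (d : ℕ) (ν : Measure (Ed d)) (r : ℝ) (Q : Set (Ed d)) : ℝ :=
  sSup {v : ℝ | ∃ Q' ∈ Ddy d, Q' ⊆ Q ∧ v = (ν Q').toReal * (Lam d Q').toReal ^ (r / (d:ℝ))}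

/-- The `n`-th level `J`-partition sum exponent `τ_{J,n}(q)`. -/
def tauN (d : ℕ) (ν : Measure (Ed d)) (r q : ℝ) (n : ℕ) : ℝ :=
  Real.log (∑ k ∈ (idx d n).filter (fun k => 0 < Jf d ν r (dyadicCube d n k)),
    Jf d ν r (dyadicCube d n k) ^ q) / ((n : ℝ) * Real.log 2)

/-- The `J`-partition function `τ_{J_{ν,r}}(q)`. -/
def tauJ (d : ℕ) (ν : Measure (Ed d)) (r q : ℝ) : ℝ :=
  limsup (tauN d ν r q) atTop

/-- The critical value `q_r = inf{q > 0 : τ_{J_{ν,r}}(q) < 0}`. -/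
def qrCrit (d : ℕ) (ν : Measure (Ed d)) (r : ℝ) : ℝ :=
  sInf {q : ℝ | 0 < q ∧ tauJ d ν r q < 0}

/-- The `n`-th level `L^q`-sum exponent `β_{ν,n}(q)`. -/
def betaN (d : ℕ) (ν : Measure (Ed d)) (q : ℝ) (n : ℕ) : ℝ :=
  Real.log (∑ k ∈ (idx d n).filter (fun k => 0 < ν (dyadicCube d n k)),
    ((ν (dyadicCube d n k)).toReal) ^ q) / ((n : ℝ) * Real.log 2)

/-- The `L^q`-spectrum `β_ν(q)`. -/
def betaNu (d : ℕ) (ν : Measure (Ed d)) (q : ℝ) : ℝ := limsup (betaN d ν q) atTop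

/-- Upper Minkowski (box-counting) dimension of the support of `ν`, computed through the
number of dyadic cubes of positive measure. -/
def dimMUpper (d : ℕ) (ν : Measure (Ed d)) : ℝ :=
  limsup (fun n : ℕ =>
    Real.log (((idx d n).filter fun k => 0 < ν (dyadicCube d n k)).card) /
      ((n : ℝ) * Real.log 2)) atTop

/-- `log⁺`. -/
def logPlus (x : ℝ) : ℝ := Real.log (max x 1)

/-- `N_{ν,α,r}(n) = card{Q ∈ 𝒟_n : J_{ν,r}(Q) ≥ 2^{-αn}}`. -/
def Ncount (d : ℕ) (ν : Measure (Ed d)) (α r : ℝ) (n : ℕ) : ℕ :=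
  ((idx d n).filter fun k => (2:ℝ) ^ (-(α * (n:ℝ))) ≤ Jf d ν r (dyadicCube d n k)).card

/-- `F̄_{ν,r}(α)`. -/
def FUpperAt (d : ℕ) (ν : Measure (Ed d)) (r α : ℝ) : ℝ :=
  limsup (fun n : ℕ => logPlus (Ncount d ν α r n) / ((n : ℝ) * Real.log 2)) atTop

/-- `F̲_{ν,r}(α)`. -/
def FLowerAt (d : ℕ) (ν : Measure (Ed d)) (r α : ℝ) : ℝ :=
  liminf (fun n : ℕ => logPlus (Ncount d ν α r n) / ((n : ℝ) * Real.log 2)) atTop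

/-- The upper optimized coarse multifractal dimension `F̄_r = sup_{α>0} F̄_{ν,r}(α)/α`. -/
def FUpper (d : ℕ) (ν : Measure (Ed d)) (r : ℝ) : ℝ :=
  sSup {v : ℝ | ∃ α : ℝ, 0 < α ∧ v = FUpperAt d ν r α / α}

/-- The lower optimized coarse multifractal dimension `F̲_r = sup_{α>0} F̲_{ν,r}(α)/α`. -/
def FLower (d : ℕ) (ν : Measure (Ed d)) (r : ℝ) : ℝ :=
  sSup {v : ℝ | ∃ α : ℝ, 0 < α ∧ v = FLowerAt d ν r α / α}

/-- A finite partition of `𝒬` by dyadic cubes. -/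
def IsDyadicPartition (d : ℕ) (P : Finset (Set (Ed d))) : Prop :=
  (∀ Q ∈ P, Q ∈ Ddy d) ∧ (P : Set (Set (Ed d))).PairwiseDisjoint id ∧
    ⋃₀ (P : Set (Set (Ed d))) = Qcube d

/-- `M_{ν,r}(x) = inf{card P : P ∈ Π, max_{Q ∈ P} J_{ν,r}(Q) < 1/x}`. -/
def Mx (d : ℕ) (ν : Measure (Ed d)) (r x : ℝ) : ℕ :=
  sInf {m : ℕ | ∃ P : Finset (Set (Ed d)), IsDyadicPartition d P ∧
    (∀ Q ∈ P, Jf d ν r Q < 1 / x) ∧ P.card = m}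

/-- The upper `(ν,r)`-partition entropy `h̄_{ν,r}`. -/
def hUpper (d : ℕ) (ν : Measure (Ed d)) (r : ℝ) : ℝ :=
  limsup (fun x : ℝ => Real.log (Mx d ν r x) / Real.log x) atTop

/-- The lower `(ν,r)`-partition entropy `h̲_{ν,r}`. -/
def hLowerBase (d : ℕ) (ν : Measure (Ed d)) (r : ℝ) : ℝ :=
  liminf (fun x : ℝ => Real.log (Mx d ν r x) / Real.log x) atTop

/-- `h̲_r = lim_{ε ↓ 0} h̲_{ν,r-ε}`. -/
def hLowerLim (d : ℕ) (ν : Measure (Ed d)) (r : ℝ) : ℝ :=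
  limUnder (𝓝[>] (0:ℝ)) (fun ε => hLowerBase d ν (r - ε))

/-- The value `(∫ d(x,A)^r dν)^{1/r}` (resp. `exp ∫ log d(x,A) dν` for `r = 0`) of the
quantization functional at the codebook `A`; computed in `[0,∞]` so that for `r < 0` a
non-integrable integrand gives the value `0`. -/
def eVal (d : ℕ) (ν : Measure (Ed d)) (A : Finset (Ed d)) (r : ℝ) : ℝ :=
  if r = 0 then Real.exp (∫ x, Real.log (infDist x (A : Set (Ed d))) ∂ν)
  else ((∫⁻ x, ENNReal.ofReal (infDist x (A : Set (Ed d))) ^ r ∂ν) ^ (1 / r)).toReal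

/-- The `n`-th quantization error `e_{n,r}(ν)` of order `r`. -/
def qerr (d : ℕ) (ν : Measure (Ed d)) (n : ℕ) (r : ℝ) : ℝ :=
  sInf {e : ℝ | ∃ A : Finset (Ed d), A.Nonempty ∧ A.card ≤ n ∧ e = eVal d ν A r}

/-- The upper quantization dimension `D̄_r(ν)` (with the convention `1/log 0 = 0`,
realized by `Real.log 0 = 0`). -/
def upperD (d : ℕ) (ν : Measure (Ed d)) (r : ℝ) : ℝ :=
  limsup (fun n : ℕ => Real.log n / (- Real.log (qerr d ν n r))) atTop

/-- The lower quantization dimension `D̲_r(ν)`. -/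
def lowerD (d : ℕ) (ν : Measure (Ed d)) (r : ℝ) : ℝ :=
  liminf (fun n : ℕ => Real.log n / (- Real.log (qerr d ν n r))) atTop

/-- The sequence `n^{1/κ} e_{n,r}(ν)`, viewed in `[0,∞]`. -/
def qcoefSeq (d : ℕ) (ν : Measure (Ed d)) (κ r : ℝ) (n : ℕ) : ℝ≥0∞ :=
  ENNReal.ofReal ((n : ℝ) ^ (1 / κ) * qerr d ν n r)

/-- The `κ`-dimensional quantization coefficient of order `r` exists and equals `c`. -/
def HasQCoef (d : ℕ) (ν : Measure (Ed d)) (κ r : ℝ) (c : ℝ≥0∞) : Prop :=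
  Tendsto (qcoefSeq d ν κ r) atTop (𝓝 c)

/-- The `κ`-dimensional quantization coefficient of order `r` (junk value if the limit
does not exist). -/
def qcoef (d : ℕ) (ν : Measure (Ed d)) (κ r : ℝ) : ℝ≥0∞ :=
  limUnder atTop (qcoefSeq d ν κ r)

/-- `s_h = sup{s > 0 : ‖h‖_{L^s(Λ)} < ∞}`. -/
def sCrit (d : ℕ) (h : Ed d → ℝ≥0∞) : ℝ :=
  sSup {s : ℝ | 0 < s ∧ ∫⁻ x in Qcube d, h x ^ s < ⊤}

/-- `Φ_r(h)`. -/
def Phi (d : ℕ) (r : ℝ) (h : Ed d → ℝ≥0∞) : ℝ :=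
  if r ≤ -(d:ℝ) then 0
  else if r = 0 then
    Real.exp (-(1/(d:ℝ)) * ∫ x in Qcube d, (h x).toReal * Real.log (h x).toReal)
  else ((∫⁻ x in Qcube d, h x ^ ((d:ℝ)/((d:ℝ)+r))) ^ (((d:ℝ)+r)/(d:ℝ) * (1/r))).toReal

/-- `a_ν = sup{q_r : r ∈ (-dim_∞(ν),0)}`, computed in `[0,∞]`. -/
def aNu (d : ℕ) (ν : Measure (Ed d)) : ℝ≥0∞ :=
  ⨆ r ∈ Set.Ioo (-(dimInfty d ν)) (0:ℝ), ENNReal.ofReal (qrCrit d ν r)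

/-- `ν` is multifractal-regular at `r`. -/
def MFregular (d : ℕ) (ν : Measure (Ed d)) (r : ℝ) : Prop :=
  FLower d ν r = FUpper d ν r

/-- `ν` is partition function regular at `r`. -/
def PFregular (d : ℕ) (ν : Measure (Ed d)) (r : ℝ) : Prop :=
  (∃ ε > 0, ∀ q ∈ Set.Ioo (qrCrit d ν r - ε) (qrCrit d ν r),
      Tendsto (tauN d ν r q) atTop (𝓝 (tauJ d ν r q))) ∨
  (Tendsto (tauN d ν r (qrCrit d ν r)) atTop (𝓝 (tauJ d ν r (qrCrit d ν r))) ∧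
      DifferentiableAt ℝ (tauJ d ν r) (qrCrit d ν r))

/-- Distance between two sets. -/
def setDist (d : ℕ) (S T : Set (Ed d)) : ℝ :=
  sInf {v : ℝ | ∃ x ∈ S, ∃ y ∈ T, v = dist x y}

/-- The `2^{-n+1}`-parallel set `B_n(Q̃)` of a dyadic cube `Q̃`. -/
def parSet (d n : ℕ) (Qt : Set (Ed d)) : Set (Ed d) :=
  ⋃ Q ∈ {Q ∈ DnAll d (n-1) | (closure Qt ∩ closure Q).Nonempty}, Q

/-- `V_{n,r}(μ) = sup_A ∫ d(x,A)^r dμ` for `r < 0`, computed in `[0,∞]`. -/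
def Vnr (d : ℕ) (μ : Measure (Ed d)) (n : ℕ) (r : ℝ) : ℝ≥0∞ :=
  ⨆ (A : Finset (Ed d)) (_ : A.Nonempty ∧ A.card ≤ n),
    ∫⁻ x, ENNReal.ofReal (infDist x (A : Set (Ed d))) ^ r ∂μ

lemma aux_eVal_nonneg (d : ℕ) (ν : Measure (Ed d)) (A : Finset (Ed d)) (r : ℝ) :
    0 ≤ eVal d ν A r := by
  unfold eVal
  split_ifs
  · exact (Real.exp_pos _).le
  · exact ENNReal.toReal_nonneg

lemma aux_integral_top (d : ℕ) (hd : 0 < d) (ν : Measure (Ed d)) [IsFiniteMeasure ν]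
    (hac : volume.withDensity (ν.rnDeriv volume) ≠ 0) :
    ∃ a : Ed d, ∫⁻ x, ENNReal.ofReal (dist x a) ^ (-(d:ℝ)) ∂ν = ∞ := by
  have hdpos : (0:ℝ) < d := Nat.cast_pos.mpr hd
  -- find a density point with positive finite derivative
  have hne : ¬ (ν.rnDeriv volume =ᵐ[volume] 0) := by
    intro h
    exact hac (by rw [withDensity_congr_ae h, withDensity_zero])
  have h1 := Besicovitch.ae_tendsto_rnDeriv ν (volume : Measure (Ed d))
  have h2 := Measure.rnDeriv_lt_top ν (volume : Measure (Ed d))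
  have hEx : ∃ a : Ed d, ν.rnDeriv volume a ≠ 0 ∧ ν.rnDeriv volume a < ∞ ∧
      Tendsto (fun r => ν (closedBall a r) / volume (closedBall a r)) (𝓝[>] 0)
        (𝓝 (ν.rnDeriv volume a)) := by
    by_contra hcon
    push_neg at hcon
    apply hne
    filter_upwards [h1, h2] with a h1a h2a
    by_contra h0
    exact (hcon a h0 h2a) h1a
  obtain ⟨a, hL0, hLtop, htend⟩ := hEx
  set L := ν.rnDeriv volume a with hLdef
  refine ⟨a, ?_⟩
  set g : Ed d → ℝ≥0∞ := fun x => ENNReal.ofReal (dist x a) ^ (-(d:ℝ)) with hgdef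
  have hgmeas : Measurable g := by
    apply Measurable.pow_const
    exact ENNReal.measurable_ofReal.comp (measurable_dist.comp
      (measurable_id.prodMk measurable_const))
  by_contra hT
  -- the ratio is eventually large
  have hev : ∀ᶠ r in 𝓝[>] (0:ℝ),
      L / 2 < ν (closedBall a r) / volume (closedBall a r) :=
    htend.eventually (eventually_gt_nhds (ENNReal.half_lt_self hL0 hLtop.ne))
  rw [eventually_nhdsWithin_iff, Metric.eventually_nhds_iff] at hev
  obtain ⟨ε, hε, hP⟩ := hev
  set rr : ℕ → ℝ := fun k => (ε / 2) * (1 / 2) ^ k with hrrdef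
  have hrrpos : ∀ k, 0 < rr k := fun k => by positivity
  have hrrlt : ∀ k, rr k < ε := by
    intro k
    calc rr k ≤ (ε / 2) * 1 := by
          apply mul_le_mul_of_nonneg_left _ (by positivity)
          exact pow_le_one₀ (by norm_num) (by norm_num)
      _ < ε := by linarith
  have hrr_anti : Antitone rr := by
    intro k m hkm
    apply mul_le_mul_of_nonneg_left _ (by positivity)
    exact pow_le_pow_of_le_one (by norm_num) (by norm_num) hkm
  have hrr0 : Tendsto rr atTop (𝓝 0) := by
    rw [hrrdef]
    have h := (tendsto_pow_atTop_nhds_zero_of_lt_one (by norm_num : (0:ℝ) ≤ 1/2)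
      (by norm_num : (1:ℝ)/2 < 1)).const_mul (ε / 2)
    rw [mul_zero] at h
    exact h
  -- measure lower bound on balls
  have hmeasball : ∀ k, (L / 2) * volume (closedBall a (rr k)) ≤ ν (closedBall a (rr k)) := by
    intro k
    have hlt : L / 2 < ν (closedBall a (rr k)) / volume (closedBall a (rr k)) := by
      apply hP
      · simp [Real.dist_eq, abs_of_pos (hrrpos k), hrrlt k]
      · exact hrrpos k
    have hv0 : volume (closedBall a (rr k)) ≠ 0 :=
      (measure_closedBall_pos volume a (hrrpos k)).ne'
    have hvtop : volume (closedBall a (rr k)) ≠ ∞ := measure_closedBall_lt_top.ne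
    exact (ENNReal.le_div_iff_mul_le (Or.inl hv0) (Or.inl hvtop)).1 hlt.le
  -- pointwise lower bound for g on the ball
  have hglow : ∀ k, ∀ x ∈ closedBall a (rr k) \ ({a} : Set (Ed d)),
      ENNReal.ofReal (rr k) ^ (-(d:ℝ)) ≤ g x := by
    intro k x hx
    have hdist : dist x a ≤ rr k := mem_closedBall.1 hx.1
    have : ENNReal.ofReal (dist x a) ^ ((d:ℝ)) ≤ ENNReal.ofReal (rr k) ^ ((d:ℝ)) :=
      ENNReal.rpow_le_rpow (ENNReal.ofReal_le_ofReal hdist) hdpos.le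
    rw [hgdef]
    simp only []
    rw [ENNReal.rpow_neg, ENNReal.rpow_neg]
    exact ENNReal.inv_le_inv.2 this
  -- case on the atom at a
  by_cases hatom : ν ({a} : Set (Ed d)) = 0
  · -- main case
    set S : ℕ → Set (Ed d) := fun k => closedBall a (rr k) \ {a} with hSdef
    have hSmeas : ∀ k, MeasurableSet (S k) :=
      fun k => measurableSet_closedBall.diff (measurableSet_singleton a)
    set μ' := ν.withDensity g with hμ'def
    have hμ'app : ∀ k, μ' (S k) = ∫⁻ x in S k, g x ∂ν :=
      fun k => withDensity_apply g (hSmeas k)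
    set c : ℝ≥0∞ := (L / 2) * volume (closedBall (0 : Ed d) 1) with hcdef
    have hc0 : c ≠ 0 := by
      apply mul_ne_zero
      · simp [ENNReal.div_eq_zero_iff, hL0]
      · exact ((measure_ball_pos volume _ one_pos).trans_le
          (measure_mono ball_subset_closedBall)).ne'
    have hclow : ∀ k, c ≤ μ' (S k) := by
      intro k
      have hvol : volume (closedBall a (rr k))
          = ENNReal.ofReal (rr k) ^ ((d:ℝ)) * volume (closedBall (0 : Ed d) 1) := by
        rw [Measure.addHaar_closedBall' volume a (hrrpos k).le]
        congr 1
        have hfr : Module.finrank ℝ (Ed d) = d := by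
          simp [Ed, Module.finrank_fintype_fun_eq_card]
        rw [hfr, ← Real.rpow_natCast (rr k) d, ENNReal.ofReal_rpow_of_pos (hrrpos k)]
      have hνS : ν (S k) = ν (closedBall a (rr k)) := measure_diff_null hatom
      have h1 : c ≤ ENNReal.ofReal (rr k) ^ (-(d:ℝ)) * ν (S k) := by
        rw [hνS]
        calc c = (ENNReal.ofReal (rr k) ^ (-(d:ℝ)) * ENNReal.ofReal (rr k) ^ ((d:ℝ)))
              * ((L / 2) * volume (closedBall (0 : Ed d) 1)) := by
              rw [← ENNReal.rpow_add _ _ (by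
                  simpa using (ENNReal.ofReal_pos.2 (hrrpos k)).ne')
                ENNReal.ofReal_ne_top]
              rw [neg_add_cancel, ENNReal.rpow_zero, one_mul]
          _ = ENNReal.ofReal (rr k) ^ (-(d:ℝ))
              * ((L / 2) * (ENNReal.ofReal (rr k) ^ ((d:ℝ)) * volume (closedBall (0 : Ed d) 1))) := by
              ring
          _ ≤ ENNReal.ofReal (rr k) ^ (-(d:ℝ)) * ν (closedBall a (rr k)) := by
              apply mul_le_mul_right
              rw [← hvol]
              exact hmeasball k
      calc c ≤ ENNReal.ofReal (rr k) ^ (-(d:ℝ)) * ν (S k) := h1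
        _ = ∫⁻ _ in S k, ENNReal.ofReal (rr k) ^ (-(d:ℝ)) ∂ν := (setLIntegral_const _ _).symm
        _ ≤ ∫⁻ x in S k, g x ∂ν := setLIntegral_mono hgmeas (hglow k)
        _ = μ' (S k) := (hμ'app k).symm
    have hSanti : Antitone S := by
      intro k m hkm
      exact diff_subset_diff_left (closedBall_subset_closedBall (hrr_anti hkm))
    have hSempty : ⋂ k, S k = ∅ := by
      rw [Set.eq_empty_iff_forall_notMem]
      intro x hx
      have hxa : x ≠ a := (Set.mem_iInter.1 hx 0).2
      have hle : dist x a ≤ 0 :=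
        ge_of_tendsto hrr0 (Filter.Eventually.of_forall fun k =>
          mem_closedBall.1 (Set.mem_iInter.1 hx k).1)
      exact hxa (by simpa using le_antisymm hle dist_nonneg)
    have hfin : μ' (S 0) ≠ ∞ := by
      rw [hμ'app 0]
      intro h
      apply hT
      have h2 : ∫⁻ x in S 0, g x ∂ν ≤ ∫⁻ x, g x ∂ν := setLIntegral_le_lintegral _ _
      rw [h] at h2
      exact top_le_iff.1 h2
    have htendS : Tendsto (μ' ∘ S) atTop (𝓝 (μ' (⋂ k, S k))) :=
      tendsto_measure_iInter_atTop (fun k => (hSmeas k).nullMeasurableSet) hSanti ⟨0, hfin⟩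
    rw [hSempty] at htendS
    simp only [measure_empty] at htendS
    have : c ≤ 0 := ge_of_tendsto htendS (Filter.Eventually.of_forall hclow)
    exact hc0 (le_zero_iff.1 this)
  · -- atom case : g a = ∞ on a set of positive measure
    apply hT
    have hga : g a = ∞ := by
      rw [hgdef]
      simp only [dist_self, ENNReal.ofReal_zero]
      exact ENNReal.zero_rpow_of_neg (by linarith)
    have : ∫⁻ x in ({a} : Set (Ed d)), g x ∂ν ≤ ∫⁻ x, g x ∂ν :=
      setLIntegral_le_lintegral _ _
    rw [lintegral_singleton g a, hga, ENNReal.top_mul hatom] at this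
    exact top_le_iff.1 this

/-- If the Lebesgue decomposition of a compactly supported Borel probability
measure `ν` on `ℝ^d` has a nonzero absolutely continuous part with respect to Lebesgue
measure, then `e_{n,-d}(ν) = 0` for every `n`. -/
theorem quantization_error_neg_d_eq_zero_of_ac_part_ne_zero
    (d : ℕ) (hd : 0 < d) (ν : Measure (Ed d)) [IsProbabilityMeasure ν]
    (K : Set (Ed d)) (hK : IsCompact K) (hKsupp : ν Kᶜ = 0)
    (hac : volume.withDensity (ν.rnDeriv volume) ≠ 0) :
    ∀ n : ℕ, qerr d ν n (-(d:ℝ)) = 0 := by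
  intro n
  have hdpos : (0:ℝ) < d := Nat.cast_pos.mpr hd
  have hdne : -(d:ℝ) ≠ 0 := by linarith
  rcases Nat.eq_zero_or_pos n with hn | hn
  · subst hn
    have hempty : {e : ℝ | ∃ A : Finset (Ed d), A.Nonempty ∧ A.card ≤ 0 ∧
        e = eVal d ν A (-(d:ℝ))} = ∅ := by
      rw [Set.eq_empty_iff_forall_notMem]
      rintro e ⟨A, hA, hcard, _⟩
      have := Finset.card_pos.2 hA
      omega
    rw [qerr, hempty, Real.sInf_empty]
  · obtain ⟨a, ha⟩ := aux_integral_top d hd ν hac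
    have heval : eVal d ν {a} (-(d:ℝ)) = 0 := by
      rw [eVal, if_neg hdne]
      have hint : ∫⁻ x, ENNReal.ofReal
          (infDist x (({a} : Finset (Ed d)) : Set (Ed d))) ^ (-(d:ℝ)) ∂ν = ∞ := by
        rw [show (({a} : Finset (Ed d)) : Set (Ed d)) = {a} from Finset.coe_singleton a]
        simpa only [Metric.infDist_singleton] using ha
      rw [hint, ENNReal.top_rpow_of_neg (by
        rw [one_div_neg]; linarith)]
      simp
    have hmem : (0:ℝ) ∈ {e : ℝ | ∃ A : Finset (Ed d), A.Nonempty ∧ A.card ≤ n ∧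
        e = eVal d ν A (-(d:ℝ))} :=
      ⟨{a}, Finset.singleton_nonempty a, by simpa using Nat.succ_le_of_lt hn, heval.symm⟩
    rw [qerr]
    apply le_antisymm
    · apply csInf_le _ hmem
      exact ⟨0, by rintro e ⟨A, -, -, rfl⟩; exact aux_eVal_nonneg d ν A _⟩
    · exact le_csInf ⟨0, hmem⟩ (by rintro e ⟨A, -, -, rfl⟩; exact aux_eVal_nonneg d ν A _)
end
end

section
/- Let Q̃ be a half-open dyadic cube in ℝ^d, A ⊂ ℝ^d a finite set, and n an integer with n > |log₂|Q̃||. Then card{Q ∈ 𝒟_n(Q̃) : d(Q,A) ≥ |Q| and for all Q' ∈ 𝒟_{n−1}(Q̃) with Q' ⊃ Q one has d(Q',A) < |Q'|} ≤ 6^d · card(A ∩ B_n(Q̃)). -/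
open MeasureTheory Filter Set Metric
open scoped ENNReal NNReal Topology Classical

noncomputable section

/-- Auxiliary: every dyadic cube is nonempty. -/
lemma dyadic_nonempty (d p : ℕ) (k : Fin d → ℤ) : (dyadicCube d p k).Nonempty := by
  refine ⟨fun i => ((k i : ℝ) + 1) / 2 ^ p, fun i => ⟨?_, le_refl _⟩⟩
  exact (div_lt_div_iff_of_pos_right (by positivity)).mpr (by linarith)

/-- Auxiliary: the index of a dyadic cube is unique. -/
lemma dyadic_inj {d p : ℕ} {k k' : Fin d → ℤ}
    (h : dyadicCube d p k = dyadicCube d p k') : k = k' := by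
  funext i
  obtain ⟨w, hw⟩ := dyadic_nonempty d p k
  obtain ⟨w', hw'⟩ := dyadic_nonempty d p k'
  have hw2 : w ∈ dyadicCube d p k' := h ▸ hw
  have hw2' : w' ∈ dyadicCube d p k := h ▸ hw'
  have e1 : (k' i : ℝ) < (k i : ℝ) + 1 := by
    have := lt_of_lt_of_le (hw2 i).1 (hw i).2
    exact (div_lt_div_iff_of_pos_right (by positivity : (0:ℝ) < 2 ^ p)).mp this
  have e2 : (k i : ℝ) < (k' i : ℝ) + 1 := by
    have := lt_of_lt_of_le (hw2' i).1 (hw' i).2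
    exact (div_lt_div_iff_of_pos_right (by positivity : (0:ℝ) < 2 ^ p)).mp this
  have e1' : k' i < k i + 1 := by exact_mod_cast e1
  have e2' : k i < k' i + 1 := by exact_mod_cast e2
  omega

/-- Auxiliary: rewriting a dyadic rational to a finer denominator. -/
lemma cast_div_pow (a : ℤ) {p q : ℕ} (h : p ≤ q) :
    (a : ℝ) / 2 ^ p = ((a * 2 ^ (q - p) : ℤ) : ℝ) / 2 ^ q := by
  have h2 : (2:ℝ) ^ q = 2 ^ (q - p) * 2 ^ p := by
    rw [← pow_add]; congr 1; omega
  push_cast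
  rw [div_eq_div_iff (by positivity) (by positivity), h2]
  ring

/-- Auxiliary: the closure of a dyadic cube. -/
lemma closure_dyadic (d p : ℕ) (k : Fin d → ℤ) :
    closure (dyadicCube d p k) =
      {x : Ed d | ∀ i, x i ∈ Set.Icc ((k i : ℝ) / 2 ^ p) (((k i : ℝ) + 1) / 2 ^ p)} := by
  have hpi : dyadicCube d p k =
      Set.pi Set.univ (fun i => Set.Ioc ((k i : ℝ) / 2 ^ p) (((k i : ℝ) + 1) / 2 ^ p)) := by
    ext x; simp [dyadicCube, Set.mem_pi]
  have hne : ∀ i : Fin d, (k i : ℝ) / 2 ^ p ≠ ((k i : ℝ) + 1) / 2 ^ p := by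
    intro i
    exact ne_of_lt ((div_lt_div_iff_of_pos_right (by positivity)).mpr (by linarith))
  rw [hpi, closure_pi_set]
  ext x
  simp only [Set.mem_pi, Set.mem_univ, forall_true_left, Set.mem_setOf_eq]
  constructor <;> intro hx i <;> have := hx i
  · rwa [closure_Ioc (hne i)] at this
  · rwa [closure_Ioc (hne i)]

/-- Auxiliary: a choice of index for a dyadic cube. -/
def kOf (d n : ℕ) (Q : Set (Ed d)) : Fin d → ℤ :=
  if h : ∃ k, Q = dyadicCube d n k then h.choose else fun _ => 0

lemma kOf_spec {d n : ℕ} {Q : Set (Ed d)} (h : Q ∈ DnAll d n) :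
    Q = dyadicCube d n (kOf d n Q) := by
  have h' : ∃ k, Q = dyadicCube d n k := h
  rw [kOf, dif_pos h']
  exact h'.choose_spec

/-- combinatorial covering lemma. For a dyadic cube `Q̃` of generation `m`,
a finite set `A ⊆ ℝ^d` and `n > m`, the number of cubes `Q ∈ 𝒟_n(Q̃)` with
`d(Q,A) ≥ |Q|` whose dyadic parent `Q' ∈ 𝒟_{n-1}(Q̃)` satisfies `d(Q',A) < |Q'|`
is at most `6^d · card(A ∩ B_n(Q̃))`. -/
theorem card_bad_cubes_le
    (d : ℕ) (hd : 0 < d) (m : ℕ) (k0 : Fin d → ℤ) (A : Finset (Ed d))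
    (n : ℕ) (hn : m < n) :
    Set.ncard {Q : Set (Ed d) | Q ∈ DnAll d n ∧ Q ⊆ dyadicCube d m k0 ∧
        (2:ℝ) ^ (-(n:ℝ)) ≤ setDist d Q (A : Set (Ed d)) ∧
        (∀ Q' ∈ DnAll d (n-1), Q' ⊆ dyadicCube d m k0 → Q ⊆ Q' →
          setDist d Q' (A : Set (Ed d)) < (2:ℝ) ^ (-((n:ℝ)-1)))} ≤
      6 ^ d * ((A : Set (Ed d)) ∩ parSet d n (dyadicCube d m k0)).ncard := by
  classical
  have h1n : 1 ≤ n := by omega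
  have hmn1 : m ≤ n - 1 := by omega
  set Bad := {Q : Set (Ed d) | Q ∈ DnAll d n ∧ Q ⊆ dyadicCube d m k0 ∧
        (2:ℝ) ^ (-(n:ℝ)) ≤ setDist d Q (A : Set (Ed d)) ∧
        (∀ Q' ∈ DnAll d (n-1), Q' ⊆ dyadicCube d m k0 → Q ⊆ Q' →
          setDist d Q' (A : Set (Ed d)) < (2:ℝ) ^ (-((n:ℝ)-1)))} with hBad
  have hpown : (2:ℝ) ^ n = 2 * 2 ^ (n-1) := by
    rw [← pow_succ']; congr 1; omega
  have hpowm : (2:ℝ) ^ (n-1) = 2 ^ (n-1-m) * 2 ^ m := by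
    rw [← pow_add]; congr 1; omega
  have hpownm : (2:ℝ) ^ n = 2 ^ (n-m) * 2 ^ m := by
    rw [← pow_add]; congr 1; omega
  have hZ : (2:ℤ) ^ (n-m) = 2 * 2 ^ (n-1-m) := by
    rw [← pow_succ']; congr 1; omega
  have he0 : (0:ℝ) < 2 ^ (n-1) := by positivity
  have hrpow1 : (2:ℝ) ^ (-((n:ℝ)-1)) = ((2:ℝ) ^ (n-1))⁻¹ := by
    have h1 : ((n:ℝ)-1) = ((n-1 : ℕ) : ℝ) := by
      rw [Nat.cast_sub h1n]; push_cast; ring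
    rw [h1, ← Real.rpow_natCast (2:ℝ) (n-1), ← Real.rpow_neg (by norm_num)]
  -- main claim: to every bad cube we can associate a point of `A ∩ B_n(Q̃)`
  -- lying (after rescaling) within a fixed `6^d`-element window of the cube's index
  have main : ∀ Q ∈ Bad, ∃ a : Ed d,
      a ∈ (A : Set (Ed d)) ∩ parSet d n (dyadicCube d m k0) ∧
      ∀ i, kOf d n Q i - 2 * ⌊a i * 2 ^ (n-1)⌋ ∈ Finset.Icc (-2:ℤ) 3 := by
    intro Q hQ
    rw [hBad, Set.mem_setOf_eq] at hQ
    obtain ⟨hQD, hQsub, hQdist, hQpar⟩ := hQ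
    set k := kOf d n Q with hk
    have hQk : Q = dyadicCube d n k := kOf_spec hQD
    -- `A` is nonempty
    have hA : (A : Set (Ed d)).Nonempty := by
      rcases A.eq_empty_or_nonempty with hAe | hAne
      · exfalso
        have hset : {v : ℝ | ∃ x ∈ Q, ∃ y ∈ (A : Set (Ed d)), v = dist x y} = ∅ := by
          simp [hAe]
        rw [setDist, hset, Real.sInf_empty] at hQdist
        exact absurd hQdist (not_le.mpr (Real.rpow_pos_of_pos two_pos _))
      · exact Finset.coe_nonempty.mpr hAne
    -- coordinatewise integer bounds from `Q ⊆ Q̃`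
    have hcoord : ∀ i, k0 i * 2 ^ (n-m) ≤ k i ∧ k i + 1 ≤ (k0 i + 1) * 2 ^ (n-m) := by
      intro i
      have hIoc : Set.Ioc ((k i : ℝ)/2^n) (((k i : ℝ)+1)/2^n) ⊆
          Set.Ioc ((k0 i : ℝ)/2^m) (((k0 i : ℝ)+1)/2^m) := by
        intro t ht
        have hx : (fun i' => if i' = i then t else ((k i' : ℝ)+1)/2^n) ∈ dyadicCube d n k := by
          intro i'
          by_cases h' : i' = i
          · subst h'; simpa using ht
          · simp only [if_neg h']
            exact ⟨(div_lt_div_iff_of_pos_right (by positivity)).mpr (by linarith), le_refl _⟩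
        have hxQ : (fun i' => if i' = i then t else ((k i' : ℝ)+1)/2^n) ∈ Q := by
          rw [hQk]; exact hx
        have h2 := hQsub hxQ i
        simpa using h2
      rw [Set.Ioc_subset_Ioc_iff
        ((div_lt_div_iff_of_pos_right (by positivity)).mpr (by linarith))] at hIoc
      obtain ⟨hu, hl⟩ := hIoc
      constructor
      · rw [div_le_div_iff₀ (by positivity) (by positivity), hpownm, ← mul_assoc] at hl
        have := le_of_mul_le_mul_right hl (by positivity : (0:ℝ) < 2 ^ m)
        exact_mod_cast this
      · rw [div_le_div_iff₀ (by positivity) (by positivity), hpownm, ← mul_assoc] at hu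
        have := le_of_mul_le_mul_right hu (by positivity : (0:ℝ) < 2 ^ m)
        exact_mod_cast this
    -- the dyadic parent
    set j : Fin d → ℤ := fun i => k i / 2 with hj
    have hjk : ∀ i, 2 * j i ≤ k i ∧ k i < 2 * j i + 2 := by
      intro i; simp only [hj]; omega
    have hjbound : ∀ i, k0 i * 2 ^ (n-1-m) ≤ j i ∧ j i + 1 ≤ (k0 i + 1) * 2 ^ (n-1-m) := by
      intro i
      obtain ⟨h1, h2⟩ := hcoord i
      rw [hZ] at h1 h2
      obtain ⟨X, hX⟩ : ∃ X, k0 i * (2:ℤ) ^ (n-1-m) = X := ⟨_, rfl⟩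
      obtain ⟨Y, hY⟩ : ∃ Y, (k0 i + 1) * (2:ℤ) ^ (n-1-m) = Y := ⟨_, rfl⟩
      have h1' : 2 * X ≤ k i := by rw [← hX]; linarith
      have h2' : k i + 1 ≤ 2 * Y := by rw [← hY]; linarith
      obtain ⟨h3, h4⟩ := hjk i
      rw [hX, hY]
      omega
    have hQQp : Q ⊆ dyadicCube d (n-1) j := by
      rw [hQk]
      intro x hx i
      obtain ⟨h1, h2⟩ := hx i
      have hji : ((2 * j i : ℤ) : ℝ) ≤ (k i : ℝ) := by exact_mod_cast (hjk i).1
      have hji2 : ((k i : ℝ) + 1) ≤ ((2 * j i + 2 : ℤ) : ℝ) := by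
        have : k i + 1 ≤ 2 * j i + 2 := by have := (hjk i).2; omega
        push_cast
        have h' := (Int.cast_le (R := ℝ)).mpr this
        push_cast at h'
        linarith
      push_cast at hji hji2
      constructor
      · refine lt_of_le_of_lt ?_ h1
        rw [div_le_div_iff₀ (by positivity) (by positivity), hpown]
        nlinarith [he0]
      · refine le_trans h2 ?_
        rw [div_le_div_iff₀ (by positivity) (by positivity), hpown]
        nlinarith [he0]
    have hQpsub : dyadicCube d (n-1) j ⊆ dyadicCube d m k0 := by
      intro x hx i
      obtain ⟨h1, h2⟩ := hx i
      obtain ⟨hb1, hb2⟩ := hjbound i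
      have hb1' : (k0 i : ℝ) * 2 ^ (n-1-m) ≤ (j i : ℝ) := by exact_mod_cast hb1
      have hb2' : ((j i : ℝ) + 1) ≤ ((k0 i : ℝ) + 1) * 2 ^ (n-1-m) := by exact_mod_cast hb2
      have hm0 : (0:ℝ) < 2 ^ m := by positivity
      have hm1' : (0:ℝ) < 2 ^ (n-1-m) := by positivity
      constructor
      · refine lt_of_le_of_lt ?_ h1
        rw [div_le_div_iff₀ (by positivity) (by positivity), hpowm]
        nlinarith
      · refine le_trans h2 ?_
        rw [div_le_div_iff₀ (by positivity) (by positivity), hpowm]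
        nlinarith
    -- apply the parent hypothesis
    have hdistp := hQpar (dyadicCube d (n-1) j) ⟨j, rfl⟩ hQpsub hQQp
    rw [hrpow1] at hdistp
    have hbdd : BddBelow {v : ℝ | ∃ x ∈ dyadicCube d (n-1) j,
        ∃ y ∈ (A : Set (Ed d)), v = dist x y} := by
      refine ⟨0, ?_⟩
      rintro v ⟨x, _, y, _, rfl⟩
      exact dist_nonneg
    have hSne : {v : ℝ | ∃ x ∈ dyadicCube d (n-1) j,
        ∃ y ∈ (A : Set (Ed d)), v = dist x y}.Nonempty := by
      obtain ⟨x, hx⟩ := dyadic_nonempty d (n-1) j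
      obtain ⟨a, ha⟩ := hA
      exact ⟨dist x a, x, hx, a, ha, rfl⟩
    rw [setDist] at hdistp
    obtain ⟨v, ⟨x, hxQp, a, haA, rfl⟩, hvlt⟩ := (csInf_lt_iff hbdd hSne).mp hdistp
    have hxa : ∀ i, |x i - a i| < ((2:ℝ) ^ (n-1))⁻¹ := by
      intro i
      refine lt_of_le_of_lt ?_ hvlt
      rw [← Real.dist_eq]
      exact dist_le_pi_dist x a i
    have hxQt := hQpsub hxQp
    refine ⟨a, ⟨haA, ?_⟩, ?_⟩
    · -- `a ∈ parSet d n Q̃`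
      set j2 : Fin d → ℤ := fun i => ⌈a i * 2 ^ (n-1)⌉ - 1 with hj2
      have haj2 : a ∈ dyadicCube d (n-1) j2 := by
        intro i
        constructor
        · rw [div_lt_iff₀ he0]
          simp only [hj2]
          have := Int.ceil_lt_add_one (a i * 2 ^ (n-1))
          push_cast
          linarith
        · rw [le_div_iff₀ he0]
          simp only [hj2]
          have := Int.le_ceil (a i * 2 ^ (n-1))
          push_cast
          linarith
      have hcross : ∀ i, (j2 i : ℝ)/2^(n-1) ≤ ((k0 i : ℝ)+1)/2^m ∧
          (k0 i : ℝ)/2^m ≤ ((j2 i : ℝ)+1)/2^(n-1) := by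
        intro i
        have habs := hxa i
        rw [abs_sub_lt_iff] at habs
        have hx1 : (k0 i : ℝ)/2^m < x i := (hxQt i).1
        have hx2 : x i ≤ ((k0 i : ℝ)+1)/2^m := (hxQt i).2
        have ha1 : (j2 i : ℝ)/2^(n-1) < a i := (haj2 i).1
        have ha2 : a i ≤ ((j2 i : ℝ)+1)/2^(n-1) := (haj2 i).2
        have hC1 : ((k0 i : ℝ)+1)/2^m = (((k0 i + 1) * 2 ^ (n-1-m) : ℤ) : ℝ)/2^(n-1) := by
          rw [← cast_div_pow (k0 i + 1) hmn1]
          push_cast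
          ring
        have hC2 : (k0 i : ℝ)/2^m = (((k0 i) * 2 ^ (n-1-m) : ℤ) : ℝ)/2^(n-1) := by
          rw [← cast_div_pow (k0 i) hmn1]
        constructor
        · -- j2 ≤ (k0+1) 2^{n-1-m}
          have hr : (j2 i : ℝ)/2^(n-1) <
              (((k0 i + 1) * 2 ^ (n-1-m) : ℤ) : ℝ)/2^(n-1) + ((2:ℝ) ^ (n-1))⁻¹ := by
            rw [← hC1]; linarith
          rw [← one_div, ← add_div] at hr
          have hint : (j2 i : ℝ) < (((k0 i + 1) * 2 ^ (n-1-m) : ℤ) : ℝ) + 1 :=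
            (div_lt_div_iff_of_pos_right he0).mp hr
          have hint' : j2 i < (k0 i + 1) * 2 ^ (n-1-m) + 1 := by exact_mod_cast hint
          rw [hC1]
          refine (div_le_div_iff_of_pos_right he0).mpr ?_
          exact_mod_cast (by omega : j2 i ≤ (k0 i + 1) * 2 ^ (n-1-m))
        · -- k0 2^{n-1-m} ≤ j2 + 1
          have hr : (((k0 i) * 2 ^ (n-1-m) : ℤ) : ℝ)/2^(n-1) <
              ((j2 i : ℝ)+1)/2^(n-1) + ((2:ℝ) ^ (n-1))⁻¹ := by
            rw [← hC2]; linarith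
          rw [← one_div, ← add_div] at hr
          have hint : (((k0 i) * 2 ^ (n-1-m) : ℤ) : ℝ) < (j2 i : ℝ) + 1 + 1 :=
            (div_lt_div_iff_of_pos_right he0).mp hr
          have hint' : (k0 i) * 2 ^ (n-1-m) < j2 i + 1 + 1 := by exact_mod_cast hint
          rw [hC2]
          refine (div_le_div_iff_of_pos_right he0).mpr ?_
          exact_mod_cast (by omega : (k0 i) * 2 ^ (n-1-m) ≤ j2 i + 1)
      have hclos : (closure (dyadicCube d m k0) ∩ closure (dyadicCube d (n-1) j2)).Nonempty := by
        refine ⟨fun i => max ((k0 i : ℝ)/2^m) ((j2 i : ℝ)/2^(n-1)), ?_, ?_⟩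
        · rw [closure_dyadic]
          intro i
          refine ⟨le_max_left _ _, max_le ?_ (hcross i).1⟩
          exact (div_le_div_iff_of_pos_right (by positivity)).mpr (by linarith)
        · rw [closure_dyadic]
          intro i
          refine ⟨le_max_right _ _, max_le (hcross i).2 ?_⟩
          exact (div_le_div_iff_of_pos_right he0).mpr (by linarith)
      refine Set.mem_biUnion ?_ haj2
      exact ⟨⟨j2, rfl⟩, hclos⟩
    · -- the index window
      intro i
      have habs := hxa i
      rw [abs_sub_lt_iff] at habs
      have hx1 : (j i : ℝ)/2^(n-1) < x i := (hxQp i).1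
      have hx2 : x i ≤ ((j i : ℝ)+1)/2^(n-1) := (hxQp i).2
      have hub : (j i : ℝ) < a i * 2 ^ (n-1) + 1 := by
        have : (j i : ℝ)/2^(n-1) < a i + ((2:ℝ) ^ (n-1))⁻¹ := by linarith
        rw [div_lt_iff₀ he0] at this
        have he' : ((2:ℝ) ^ (n-1))⁻¹ * 2 ^ (n-1) = 1 := inv_mul_cancel₀ (ne_of_gt he0)
        nlinarith
      have hlb : a i * 2 ^ (n-1) - 2 < (j i : ℝ) := by
        have : a i - ((2:ℝ) ^ (n-1))⁻¹ < ((j i : ℝ)+1)/2^(n-1) := by linarith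
        rw [lt_div_iff₀ he0] at this
        have he' : ((2:ℝ) ^ (n-1))⁻¹ * 2 ^ (n-1) = 1 := inv_mul_cancel₀ (ne_of_gt he0)
        nlinarith
      have hfl1 : (⌊a i * 2 ^ (n-1)⌋ : ℝ) ≤ a i * 2 ^ (n-1) := Int.floor_le _
      have hfl2 : a i * 2 ^ (n-1) < (⌊a i * 2 ^ (n-1)⌋ : ℝ) + 1 := Int.lt_floor_add_one _
      have hI1 : (⌊a i * 2 ^ (n-1)⌋ : ℝ) - 2 < (j i : ℝ) := by linarith
      have hI2 : (j i : ℝ) < (⌊a i * 2 ^ (n-1)⌋ : ℝ) + 2 := by linarith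
      have hI1' : ⌊a i * 2 ^ (n-1)⌋ - 2 < j i := by exact_mod_cast hI1
      have hI2' : j i < ⌊a i * 2 ^ (n-1)⌋ + 2 := by exact_mod_cast hI2
      obtain ⟨h3, h4⟩ := hjk i
      rw [Finset.mem_Icc]
      omega
  -- counting
  choose! aOf hamem hoff using main
  set F1 : Finset (Ed d) := A.filter (fun a => a ∈ parSet d n (dyadicCube d m k0)) with hF1
  have hF1coe : (A : Set (Ed d)) ∩ parSet d n (dyadicCube d m k0) = ↑F1 := by
    ext a; simp [hF1]
  set piF : Finset (Fin d → ℤ) := Fintype.piFinset (fun _ => Finset.Icc (-2:ℤ) 3) with hpiF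
  set f : Set (Ed d) → Ed d × (Fin d → ℤ) :=
    fun Q => (aOf Q, fun i => kOf d n Q i - 2 * ⌊aOf Q i * 2 ^ (n-1)⌋) with hf
  have hmaps : ∀ Q ∈ Bad, f Q ∈ (↑F1 : Set (Ed d)) ×ˢ (↑piF : Set (Fin d → ℤ)) := by
    intro Q hQ
    constructor
    · have := hamem Q hQ
      rw [hF1coe] at this
      exact this
    · have := hoff Q hQ
      simp only [hf, Finset.mem_coe, hpiF, Fintype.mem_piFinset]
      exact this
  have hinj : Set.InjOn f Bad := by
    intro Q hQ Q' hQ' heq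
    rw [hf] at heq
    have ha : aOf Q = aOf Q' := congrArg Prod.fst heq
    have hofs := congrArg Prod.snd heq
    have hkeq : kOf d n Q = kOf d n Q' := by
      funext i
      have := congrFun hofs i
      simp only at this
      rw [ha] at this
      omega
    have h1 : Q = dyadicCube d n (kOf d n Q) := kOf_spec (by
      rw [hBad, Set.mem_setOf_eq] at hQ; exact hQ.1)
    have h2 : Q' = dyadicCube d n (kOf d n Q') := kOf_spec (by
      rw [hBad, Set.mem_setOf_eq] at hQ'; exact hQ'.1)
    rw [h1, h2, hkeq]
  have hfin : ((↑F1 : Set (Ed d)) ×ˢ (↑piF : Set (Fin d → ℤ))).Finite :=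
    (F1.finite_toSet).prod (piF.finite_toSet)
  have hcount := Set.ncard_le_ncard_of_injOn f hmaps hinj hfin
  have hprod : ((↑F1 : Set (Ed d)) ×ˢ (↑piF : Set (Fin d → ℤ))).ncard = F1.card * 6 ^ d := by
    rw [← Finset.coe_product, Set.ncard_coe_finset, Finset.card_product]
    congr 1
    rw [hpiF, Fintype.card_piFinset]
    simp [Int.card_Icc]
  rw [hF1coe, Set.ncard_coe_finset]
  rw [hprod] at hcount
  rw [mul_comm]
  exact hcount
end
end

section
/- Let A ⊂ ℝ^d be a finite set, n ∈ ℕ, and let P ⊂ ∪_{k=1}^{n−1} 𝒟_k be a finite family of pairwise disjoint dyadic cubes. Then Σ_{Q̃∈P} card(A ∩ B_n(Q̃)) ≤ 3^d · card(A). -/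
open MeasureTheory Filter Set Metric
open scoped ENNReal NNReal Topology Classical

noncomputable section

section Aux14

lemma mem_dyadicCube_iff {d m : ℕ} {k : Fin d → ℤ} {x : Ed d} :
    x ∈ dyadicCube d m k ↔ ∀ i, (k i : ℝ) < x i * 2 ^ m ∧ x i * 2 ^ m ≤ (k i : ℝ) + 1 := by
  unfold dyadicCube
  simp only [Set.mem_setOf_eq, Set.mem_Ioc]
  refine forall_congr' fun i => ?_
  rw [div_lt_iff₀ (by positivity : (0:ℝ) < 2 ^ m), le_div_iff₀ (by positivity : (0:ℝ) < 2 ^ m)]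

lemma closure_cube_subset {d m : ℕ} (k : Fin d → ℤ) :
    closure (dyadicCube d m k) ⊆
      {x : Ed d | ∀ i, (k i : ℝ) ≤ x i * 2 ^ m ∧ x i * 2 ^ m ≤ (k i : ℝ) + 1} := by
  apply closure_minimal
  · intro x hx i
    exact ⟨(mem_dyadicCube_iff.1 hx i).1.le, (mem_dyadicCube_iff.1 hx i).2⟩
  · rw [Set.setOf_forall]
    refine isClosed_iInter fun i => ?_
    have h : {x : Ed d | (k i : ℝ) ≤ x i * 2 ^ m ∧ x i * 2 ^ m ≤ (k i : ℝ) + 1}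
        = (fun x : Ed d => x i * 2 ^ m) ⁻¹' Set.Icc ((k i : ℝ)) ((k i : ℝ) + 1) := rfl
    rw [h]
    exact isClosed_Icc.preimage ((continuous_apply i).mul continuous_const)

lemma coord_exists {p : ℕ} {m c : ℤ} {y : ℝ}
    (h1 : (m : ℝ) * 2 ^ p ≤ y) (h2 : y ≤ ((m : ℝ) + 1) * 2 ^ p)
    (h3 : (c : ℝ) ≤ y) (h4 : y ≤ (c : ℝ) + 1) :
    ∃ j : ℤ, m * 2 ^ p ≤ j ∧ j + 1 ≤ (m + 1) * 2 ^ p ∧ c - 1 ≤ j ∧ j ≤ c + 1 := by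
  have hp : (1:ℤ) ≤ 2 ^ p := one_le_pow₀ one_le_two
  set j : ℤ := max (m * 2 ^ p) (min (⌈y⌉ - 1) ((m + 1) * 2 ^ p - 1)) with hj
  have hexp : (m + 1) * 2 ^ p = m * 2 ^ p + 2 ^ p := by ring
  have hub : j ≤ (m + 1) * 2 ^ p - 1 :=
    max_le (by linarith) (min_le_right _ _)
  have hjy : (j : ℝ) ≤ y := by
    rw [hj]; push_cast
    refine max_le h1 (le_trans (min_le_left _ _) ?_)
    have := Int.ceil_lt_add_one y
    linarith
  have hyj : y ≤ (j : ℝ) + 1 := by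
    have h5 : y - 1 ≤ ((min (⌈y⌉ - 1) ((m + 1) * 2 ^ p - 1) : ℤ) : ℝ) := by
      push_cast
      refine le_min ?_ ?_
      · linarith [Int.le_ceil y]
      · linarith
    have h6 : ((min (⌈y⌉ - 1) ((m + 1) * 2 ^ p - 1) : ℤ) : ℝ) ≤ (j : ℝ) := by
      have hle := le_max_right (m * 2 ^ p) (min (⌈y⌉ - 1) ((m + 1) * 2 ^ p - 1))
      rw [hj]
      exact_mod_cast hle
    linarith
  refine ⟨j, le_max_left _ _, by linarith, ?_, ?_⟩
  · have hr : (c : ℝ) ≤ (j : ℝ) + 1 := le_trans h3 hyj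
    have hi : c ≤ j + 1 := by exact_mod_cast hr
    omega
  · have hr : (j : ℝ) ≤ (c : ℝ) + 1 := le_trans hjy h4
    exact_mod_cast hr

lemma cube_subset {d g N : ℕ} (hg : g ≤ N) {m j : Fin d → ℤ}
    (h : ∀ i, m i * 2 ^ (N - g) ≤ j i ∧ j i + 1 ≤ (m i + 1) * 2 ^ (N - g)) :
    dyadicCube d N j ⊆ dyadicCube d g m := by
  intro x hx
  rw [mem_dyadicCube_iff] at hx ⊢
  intro i
  have h2 : (2:ℝ) ^ N = 2 ^ g * 2 ^ (N - g) := by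
    rw [← pow_add]; congr 1; omega
  have e1 : ((m i : ℝ)) * 2 ^ (N - g) ≤ (j i : ℝ) := by exact_mod_cast (h i).1
  have e2 : (j i : ℝ) + 1 ≤ ((m i : ℝ) + 1) * 2 ^ (N - g) := by exact_mod_cast (h i).2
  have hpos : (0:ℝ) < 2 ^ (N - g) := by positivity
  constructor
  · have hxi := (hx i).1
    rw [h2, ← mul_assoc] at hxi
    have hlt : (m i : ℝ) * 2 ^ (N - g) < (x i * 2 ^ g) * 2 ^ (N - g) := lt_of_le_of_lt e1 hxi
    exact lt_of_mul_lt_mul_right hlt hpos.le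
  · have hxi := (hx i).2
    rw [h2, ← mul_assoc] at hxi
    have hle : (x i * 2 ^ g) * 2 ^ (N - g) ≤ ((m i : ℝ) + 1) * 2 ^ (N - g) := by linarith
    exact le_of_mul_le_mul_right hle hpos

lemma cube_nonempty {d N : ℕ} (j : Fin d → ℤ) : (dyadicCube d N j).Nonempty := by
  refine ⟨fun i => ((j i : ℝ) + 1) / 2 ^ N, ?_⟩
  rw [mem_dyadicCube_iff]
  intro i
  rw [div_mul_cancel₀ _ (by positivity : (2:ℝ) ^ N ≠ 0)]
  constructor <;> linarith

lemma index_eq {d N : ℕ} {k : Fin d → ℤ} {a : Ed d} (h : a ∈ dyadicCube d N k) :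
    k = fun i => ⌈a i * 2 ^ N⌉ - 1 := by
  funext i
  have h1 := mem_dyadicCube_iff.1 h i
  have hc : ⌈a i * 2 ^ N⌉ = k i + 1 := by
    rw [Int.ceil_eq_iff]
    push_cast
    exact ⟨by linarith [h1.1], by linarith [h1.2]⟩
  omega

lemma exists_j_of_mem_parSet {d n g : ℕ} (hg : g ≤ n - 1) (m : Fin d → ℤ)
    {a : Ed d} (ha : a ∈ parSet d n (dyadicCube d g m)) :
    ∃ j : Fin d → ℤ, dyadicCube d (n - 1) j ⊆ dyadicCube d g m ∧
      ∀ i, (⌈a i * 2 ^ (n - 1)⌉ - 1) - 1 ≤ j i ∧ j i ≤ (⌈a i * 2 ^ (n - 1)⌉ - 1) + 1 := by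
  rw [parSet, Set.mem_iUnion₂] at ha
  obtain ⟨Q, hQ, haQ⟩ := ha
  obtain ⟨⟨k, rfl⟩, hne⟩ := hQ
  have hk := index_eq haQ
  subst hk
  obtain ⟨x, hx1, hx2⟩ := hne
  have hx1' := closure_cube_subset m hx1
  have hx2' := closure_cube_subset (fun i => ⌈a i * 2 ^ (n - 1)⌉ - 1) hx2
  have h2 : (2:ℝ) ^ (n - 1) = 2 ^ g * 2 ^ (n - 1 - g) := by
    rw [← pow_add]; congr 1; omega
  have hpos : (0:ℝ) ≤ 2 ^ (n - 1 - g) := by positivity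
  have hcoord : ∀ i, ∃ j : ℤ, m i * 2 ^ (n - 1 - g) ≤ j ∧
      j + 1 ≤ (m i + 1) * 2 ^ (n - 1 - g) ∧
      (⌈a i * 2 ^ (n - 1)⌉ - 1) - 1 ≤ j ∧ j ≤ (⌈a i * 2 ^ (n - 1)⌉ - 1) + 1 := by
    intro i
    have hA := hx1' i
    have hB := hx2' i
    refine coord_exists (y := x i * 2 ^ (n - 1)) ?_ ?_ ?_ ?_
    · rw [h2, ← mul_assoc]
      exact mul_le_mul_of_nonneg_right hA.1 hpos
    · rw [h2, ← mul_assoc]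
      exact mul_le_mul_of_nonneg_right hA.2 hpos
    · exact_mod_cast hB.1
    · exact_mod_cast hB.2
  choose j hj1 hj2 hj3 hj4 using hcoord
  exact ⟨j, cube_subset hg (fun i => ⟨hj1 i, hj2 i⟩), fun i => ⟨hj3 i, hj4 i⟩⟩

end Aux14

/-- for a finite pairwise disjoint family `P ⊆ ⋃_{k=1}^{n-1} 𝒟_k` of dyadic
cubes and a finite set `A ⊆ ℝ^d`, `Σ_{Q̃∈P} card(A ∩ B_n(Q̃)) ≤ 3^d · card A`. -/
theorem sum_card_parallel_sets_le
    (d : ℕ) (hd : 0 < d) (A : Finset (Ed d)) (n : ℕ)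
    (P : Finset (Set (Ed d)))
    (hP : ∀ Q ∈ P, ∃ k : ℕ, 1 ≤ k ∧ k ≤ n - 1 ∧ Q ∈ DnAll d k)
    (hdisj : (P : Set (Set (Ed d))).PairwiseDisjoint id) :
    ∑ Qt ∈ P, ((A : Set (Ed d)) ∩ parSet d n Qt).ncard ≤ 3 ^ d * A.card := by
  classical
  have hcard : ∀ Qt, ((A : Set (Ed d)) ∩ parSet d n Qt).ncard
      = (A.filter (fun a => a ∈ parSet d n Qt)).card := by
    intro Qt
    rw [← Set.ncard_coe_finset]
    congr 1
    ext a
    simp [Finset.mem_filter, and_comm]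
  simp_rw [hcard]
  have hswap : ∑ Qt ∈ P, (A.filter fun a => a ∈ parSet d n Qt).card
      = ∑ a ∈ A, (P.filter fun Qt => a ∈ parSet d n Qt).card := by
    simp_rw [Finset.card_filter]
    exact Finset.sum_comm
  rw [hswap]
  have hbound : ∀ a ∈ A, (P.filter fun Qt => a ∈ parSet d n Qt).card ≤ 3 ^ d := by
    intro a _
    set c : Fin d → ℤ := fun i => ⌈a i * 2 ^ (n - 1)⌉ - 1 with hc
    set T : Finset (Fin d → ℤ) := Fintype.piFinset fun i => Finset.Icc (c i - 1) (c i + 1)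
      with hT
    have hTcard : T.card = 3 ^ d := by
      rw [hT, Fintype.card_piFinset]
      have : ∀ i : Fin d, (Finset.Icc (c i - 1) (c i + 1)).card = 3 := by
        intro i
        rw [Int.card_Icc]
        omega
      simp [this]
    have hex : ∀ Qt ∈ P.filter (fun Qt => a ∈ parSet d n Qt),
        ∃ j : Fin d → ℤ, dyadicCube d (n - 1) j ⊆ Qt ∧
          ∀ i, c i - 1 ≤ j i ∧ j i ≤ c i + 1 := by
      intro Qt hQt
      rw [Finset.mem_filter] at hQt
      obtain ⟨hQtP, haQt⟩ := hQt
      obtain ⟨g, _, hg2, k, hm⟩ := hP Qt hQtP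
      subst hm
      obtain ⟨j, hj1, hj2⟩ := exists_j_of_mem_parSet hg2 k haQt
      exact ⟨j, hj1, fun i => hj2 i⟩
    calc (P.filter fun Qt => a ∈ parSet d n Qt).card ≤ T.card := by
          apply Finset.card_le_card_of_injOn
            (fun Qt => if h : ∃ j : Fin d → ℤ, dyadicCube d (n - 1) j ⊆ Qt ∧
              ∀ i, c i - 1 ≤ j i ∧ j i ≤ c i + 1 then h.choose else c)
          · intro Qt hQt
            simp only [Finset.mem_coe]
            rw [dif_pos (hex Qt hQt)]
            have hspec := (hex Qt hQt).choose_spec.2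
            rw [hT, Fintype.mem_piFinset]
            intro i
            rw [Finset.mem_Icc]
            exact hspec i
          · intro Q1 h1 Q2 h2 hf
            simp only at hf
            rw [dif_pos (hex Q1 h1), dif_pos (hex Q2 h2)] at hf
            by_contra hne
            have hs1 := (hex Q1 h1).choose_spec.1
            have hs2 := (hex Q2 h2).choose_spec.1
            rw [hf] at hs1
            have hdis := hdisj (Finset.mem_coe.2 (Finset.mem_filter.1 h1).1)
              (Finset.mem_coe.2 (Finset.mem_filter.1 h2).1) hne
            obtain ⟨x, hx⟩ := cube_nonempty (d := d) (N := n - 1) (hex Q2 h2).choose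
            exact Set.disjoint_left.1 hdis (hs1 hx) (hs2 hx)
      _ = 3 ^ d := hTcard
  calc ∑ a ∈ A, (P.filter fun Qt => a ∈ parSet d n Qt).card
      ≤ ∑ _a ∈ A, 3 ^ d := Finset.sum_le_sum hbound
    _ = 3 ^ d * A.card := by rw [Finset.sum_const, smul_eq_mul, mul_comm]
end
end

section
/- Let ν be a nonzero finite absolutely continuous Borel measure on 𝒬 = (0,1]^d with Lebesgue density f ∈ L^s(Λ) for some s ≥ 1. Then for all q ∈ [0,s] the L^q-spectrum exists as a limit and is linear: liminf_n β_{ν,n}(q) = β_ν(q) = d(1−q); moreover, for every r ≥ d/s − d and all q ∈ [0,s], τ_{J_{ν,r}}(q) = β_ν(q) − rq = d(1−q) − rq. -/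
open MeasureTheory Filter Set Metric
open scoped ENNReal NNReal Topology Classical

noncomputable section

/-! ### Auxiliary lemmas -/

namespace LqAux

variable {d : ℕ}

lemma dyadicCube_eq_pi (n : ℕ) (k : Fin d → ℤ) :
    dyadicCube d n k =
      Set.univ.pi (fun i => Set.Ioc ((k i : ℝ) / 2 ^ n) (((k i : ℝ) + 1) / 2 ^ n)) := by
  ext x; simp [dyadicCube, Set.mem_pi]

lemma measurableSet_dyadicCube (n : ℕ) (k : Fin d → ℤ) :
    MeasurableSet (dyadicCube d n k) := by
  rw [dyadicCube_eq_pi]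
  exact MeasurableSet.univ_pi fun i => measurableSet_Ioc

lemma measurableSet_Qcube : MeasurableSet (Qcube d) := by
  have : Qcube d = Set.univ.pi (fun _ : Fin d => Set.Ioc (0:ℝ) 1) := by
    ext x; simp [Qcube, Set.mem_pi]
  rw [this]
  exact MeasurableSet.univ_pi fun i => measurableSet_Ioc

lemma volume_dyadicCube (n : ℕ) (k : Fin d → ℤ) :
    volume (dyadicCube d n k) = ENNReal.ofReal (((2:ℝ) ^ n)⁻¹ ^ d) := by
  rw [dyadicCube_eq_pi, volume_pi_pi]
  have h : ∀ i : Fin d, volume (Set.Ioc ((k i : ℝ) / 2 ^ n) (((k i : ℝ) + 1) / 2 ^ n))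
      = ENNReal.ofReal (((2:ℝ) ^ n)⁻¹) := by
    intro i
    rw [Real.volume_Ioc]
    congr 1
    field_simp
    ring
  simp only [h, Finset.prod_const, Finset.card_univ, Fintype.card_fin]
  rw [← ENNReal.ofReal_pow (by positivity)]

lemma mem_idx_iff {n : ℕ} {k : Fin d → ℤ} :
    k ∈ idx d n ↔ ∀ i, 0 ≤ k i ∧ k i ≤ 2 ^ n - 1 := by
  simp [idx, Fintype.mem_piFinset, Finset.mem_Icc]

lemma dyadicCube_subset_Qcube {n : ℕ} {k : Fin d → ℤ} (hk : k ∈ idx d n) :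
    dyadicCube d n k ⊆ Qcube d := by
  rw [mem_idx_iff] at hk
  intro x hx i
  obtain ⟨hx1, hx2⟩ := hx i
  obtain ⟨hk1, hk2⟩ := hk i
  have h2n : (0:ℝ) < 2 ^ n := by positivity
  constructor
  · have : (0:ℝ) ≤ (k i : ℝ) / 2 ^ n := by
      apply div_nonneg _ h2n.le
      exact_mod_cast hk1
    linarith
  · have hk2' : ((k i : ℝ) + 1) ≤ 2 ^ n := by
      have : (k i : ℝ) ≤ (2:ℝ) ^ n - 1 := by exact_mod_cast hk2
      linarith
    have : ((k i : ℝ) + 1) / 2 ^ n ≤ 1 := by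
      rw [div_le_one h2n]; exact hk2'
    linarith

lemma dyadicCube_disjoint {n : ℕ} {k k' : Fin d → ℤ} (hkk : k ≠ k') :
    Disjoint (dyadicCube d n k) (dyadicCube d n k') := by
  rw [Set.disjoint_left]
  intro x hx hx'
  apply hkk
  funext i
  obtain ⟨h1, h2⟩ := hx i
  obtain ⟨h1', h2'⟩ := hx' i
  have h2n : (0:ℝ) < 2 ^ n := by positivity
  have e1 : (k i : ℝ) < k' i + 1 := by
    have := lt_of_lt_of_le h1 h2'
    rwa [div_lt_div_iff₀ h2n h2n, mul_lt_mul_iff_left₀ h2n] at this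
  have e2 : (k' i : ℝ) < k i + 1 := by
    have := lt_of_lt_of_le h1' h2
    rwa [div_lt_div_iff₀ h2n h2n, mul_lt_mul_iff_left₀ h2n] at this
  have e1' : k i < k' i + 1 := by exact_mod_cast e1
  have e2' : k' i < k i + 1 := by exact_mod_cast e2
  omega

lemma Qcube_eq_biUnion (n : ℕ) : ⋃ k ∈ idx d n, dyadicCube d n k = Qcube d := by
  apply Set.Subset.antisymm
  · exact Set.iUnion₂_subset fun k hk => dyadicCube_subset_Qcube hk
  · intro x hx
    have h2n : (0:ℝ) < 2 ^ n := by positivity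
    rw [Set.mem_iUnion₂]
    refine ⟨fun i => ⌈(2:ℝ) ^ n * x i⌉ - 1, ?_, ?_⟩
    · rw [mem_idx_iff]
      intro i
      obtain ⟨hx1, hx2⟩ := hx i
      have hpos : (0:ℝ) < 2 ^ n * x i := by positivity
      have hle : (2:ℝ) ^ n * x i ≤ 2 ^ n := by
        calc (2:ℝ) ^ n * x i ≤ 2 ^ n * 1 := by
              exact mul_le_mul_of_nonneg_left hx2 h2n.le
          _ = 2 ^ n := mul_one _
      constructor
      · have : 0 < ⌈(2:ℝ) ^ n * x i⌉ := Int.ceil_pos.mpr hpos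
        omega
      · have : ⌈(2:ℝ) ^ n * x i⌉ ≤ (2:ℕ) ^ n := by
          apply Int.ceil_le.mpr
          push_cast
          exact hle
        have h2 : ((2:ℕ):ℤ) ^ n = 2 ^ n := by push_cast; ring
        omega
    · intro i
      have hceil1 : (2:ℝ) ^ n * x i ≤ ⌈(2:ℝ) ^ n * x i⌉ := Int.le_ceil _
      have hceil2 : (⌈(2:ℝ) ^ n * x i⌉ : ℝ) < 2 ^ n * x i + 1 := Int.ceil_lt_add_one _
      constructor
      · rw [div_lt_iff₀ h2n, mul_comm]
        push_cast
        linarith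
      · rw [le_div_iff₀ h2n]
        push_cast
        nlinarith [hceil1]

lemma measure_Qcube_sum (μ : Measure (Ed d)) (n : ℕ) :
    μ (Qcube d) = ∑ k ∈ idx d n, μ (dyadicCube d n k) := by
  rw [← Qcube_eq_biUnion (d := d) n]
  rw [measure_biUnion_finset]
  · intro k hk k' hk' hkk
    exact dyadicCube_disjoint hkk
  · intro k hk
    exact measurableSet_dyadicCube n k

lemma card_idx (n : ℕ) : (idx d n).card = 2 ^ (n * d) := by
  simp only [idx, Fintype.card_piFinset]
  rw [Finset.prod_const, Finset.card_univ, Fintype.card_fin]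
  have : (Finset.Icc (0:ℤ) (2 ^ n - 1)).card = 2 ^ n := by
    rw [Int.card_Icc]
    have : (2:ℤ) ^ n - 1 + 1 = ((2:ℕ) ^ n : ℤ) := by push_cast; ring
    have h2 : ((2:ℕ):ℤ) ^ n - 0 = ((2 ^ n : ℕ) : ℤ) := by push_cast; ring
    rw [this, h2, Int.toNat_natCast]
  rw [this, ← pow_mul]

end LqAux


namespace LqAux

variable {d : ℕ}

lemma mem_Dn_iff {m : ℕ} {S : Set (Ed d)} :
    S ∈ Dn d m ↔ ∃ k ∈ idx d m, S = dyadicCube d m k := by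
  constructor
  · rintro ⟨k, hk, rfl⟩
    refine ⟨k, ?_, rfl⟩
    rw [mem_idx_iff]
    intro i; have := hk i; omega
  · rintro ⟨k, hk, rfl⟩
    refine ⟨k, ?_, rfl⟩
    rw [mem_idx_iff] at hk
    intro i; have := hk i; omega

lemma mem_Ddy_iff {S : Set (Ed d)} :
    S ∈ Ddy d ↔ ∃ m, ∃ k ∈ idx d m, S = dyadicCube d m k := by
  simp only [Ddy, Set.mem_iUnion, mem_Dn_iff]

lemma dyadicCube_mem_Ddy {n : ℕ} {k : Fin d → ℤ} (hk : k ∈ idx d n) :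
    dyadicCube d n k ∈ Ddy d :=
  mem_Ddy_iff.mpr ⟨n, k, hk, rfl⟩

lemma Lam_nonQ : Lam d (Set.univ \ Qcube d) = 0 := by
  rw [Lam, Measure.restrict_apply (MeasurableSet.univ.diff measurableSet_Qcube)]
  simp

instance : IsFiniteMeasure (Lam d) := by
  constructor
  rw [Lam, Measure.restrict_apply MeasurableSet.univ, Set.univ_inter]
  have h1 : Qcube d ⊆ Set.univ.pi fun _ : Fin d => Set.Ioc (0:ℝ) 1 := by
    intro x hx; simpa [Set.mem_pi, Qcube] using hx
  calc volume (Qcube d) ≤ volume (Set.univ.pi fun _ : Fin d => Set.Ioc (0:ℝ) 1) :=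
        measure_mono h1
    _ = 1 := by simp [volume_pi_pi]
    _ < ⊤ := by norm_num

/-- For a measure with density w.r.t. `Lam d`, the whole space has the same measure as `𝒬`. -/
lemma withDensity_Q_eq_univ (g : Ed d → ℝ≥0∞) :
    ((Lam d).withDensity g) (Qcube d) = ((Lam d).withDensity g) Set.univ := by
  apply le_antisymm (measure_mono (Set.subset_univ _))
  have : ((Lam d).withDensity g) (Set.univ \ Qcube d) = 0 := by
    rw [withDensity_apply' g]
    exact setLIntegral_measure_zero _ _ Lam_nonQ
  have h2 := measure_le_inter_add_diff ((Lam d).withDensity g) Set.univ (Qcube d)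
  rw [Set.univ_inter, this, add_zero] at h2
  exact h2

lemma Lam_dyadicCube {n : ℕ} {k : Fin d → ℤ} (hk : k ∈ idx d n) :
    Lam d (dyadicCube d n k) = ENNReal.ofReal (((2:ℝ) ^ n)⁻¹ ^ d) := by
  rw [Lam, Measure.restrict_apply (measurableSet_dyadicCube n k),
    Set.inter_eq_left.mpr (dyadicCube_subset_Qcube hk), volume_dyadicCube]

lemma Lam_univ_le_one : Lam d Set.univ ≤ 1 := by
  rw [Lam, Measure.restrict_apply MeasurableSet.univ, Set.univ_inter]
  have h1 : Qcube d ⊆ Set.univ.pi fun _ : Fin d => Set.Ioc (0:ℝ) 1 := by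
    intro x hx; simpa [Set.mem_pi, Qcube] using hx
  calc volume (Qcube d) ≤ volume (Set.univ.pi fun _ : Fin d => Set.Ioc (0:ℝ) 1) :=
        measure_mono h1
    _ = 1 := by simp [volume_pi_pi]

lemma Lam_ne_top (A : Set (Ed d)) : Lam d A ≠ ⊤ := by
  have : Lam d A ≤ 1 := le_trans (measure_mono (Set.subset_univ A)) Lam_univ_le_one
  exact ne_top_of_le_ne_top (by norm_num) this

/-- Hölder's inequality for `∫ g` against the constant `1` on a set. -/
lemma holder_aux (g : Ed d → ℝ≥0∞) (hg : Measurable g) {p : ℝ} (hp : 1 < p) (A : Set (Ed d)) :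
    ∫⁻ x in A, g x ∂Lam d
      ≤ (∫⁻ x in A, g x ^ p ∂Lam d) ^ (1 / p) * (Lam d A) ^ (1 - 1 / p) := by
  have hpq : p.HolderConjugate (Real.conjExponent p) := Real.HolderConjugate.conjExponent hp
  have h := ENNReal.lintegral_mul_le_Lp_mul_Lq ((Lam d).restrict A) hpq
    hg.aemeasurable aemeasurable_const (g := fun _ => (1:ℝ≥0∞))
  simp only [Pi.mul_apply, mul_one, ENNReal.one_rpow, lintegral_const, one_mul,
    Measure.restrict_apply MeasurableSet.univ, Set.univ_inter] at h
  have hq : 1 / Real.conjExponent p = 1 - 1 / p := by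
    have := hpq.inv_add_inv_eq_one
    rw [one_div, one_div]
    linarith
  rwa [hq] at h

/-- Power-mean: for `1 ≤ p`, `(∑ a)^p ≤ card^(p-1) * ∑ a^p`. -/
lemma pm_convex {F : Finset (Fin d → ℤ)} {a : (Fin d → ℤ) → ℝ} (ha : ∀ k, 0 ≤ a k)
    {p : ℝ} (hp : 1 ≤ p) :
    (∑ k ∈ F, a k) ^ p ≤ (F.card : ℝ) ^ (p - 1) * ∑ k ∈ F, a k ^ p := by
  rcases Finset.eq_empty_or_nonempty F with rfl | hF
  · simp [Real.zero_rpow (by positivity : p ≠ 0)]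
  have hc : (0:ℝ) < F.card := by exact_mod_cast Finset.card_pos.mpr hF
  have h := Real.rpow_arith_mean_le_arith_mean_rpow F (fun _ => (F.card : ℝ)⁻¹) a
    (fun i _ => by positivity) (by
      rw [Finset.sum_const, nsmul_eq_mul]
      field_simp) (fun i _ => ha i) hp
  rw [← Finset.mul_sum, ← Finset.mul_sum] at h
  rw [Real.mul_rpow (by positivity) (Finset.sum_nonneg fun i _ => ha i)] at h
  rw [Real.inv_rpow hc.le] at h
  have hcp : (0:ℝ) < (F.card:ℝ) ^ p := Real.rpow_pos_of_pos hc p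
  rw [inv_mul_le_iff₀ hcp] at h
  calc (∑ k ∈ F, a k) ^ p ≤ (F.card:ℝ) ^ p * ((F.card : ℝ)⁻¹ * ∑ k ∈ F, a k ^ p) := h
    _ = ((F.card:ℝ) ^ p * (F.card : ℝ)⁻¹) * ∑ k ∈ F, a k ^ p := by ring
    _ = (F.card : ℝ) ^ (p - 1) * ∑ k ∈ F, a k ^ p := by
        congr 1
        rw [← Real.rpow_neg_one (F.card:ℝ), ← Real.rpow_add hc]
        ring_nf

/-- Power-mean: for `0 < t ≤ 1`, `∑ a^t ≤ card^(1-t) * (∑ a)^t`. -/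
lemma pm_concave {F : Finset (Fin d → ℤ)} {a : (Fin d → ℤ) → ℝ} (ha : ∀ k, 0 ≤ a k)
    {t : ℝ} (ht0 : 0 < t) (ht1 : t ≤ 1) :
    ∑ k ∈ F, a k ^ t ≤ (F.card : ℝ) ^ (1 - t) * (∑ k ∈ F, a k) ^ t := by
  rcases eq_or_lt_of_le ht1 with rfl | ht1'
  · simp [Real.rpow_one]
  have hp : 1 ≤ 1 / t := by
    rw [le_div_iff₀ ht0]; linarith
  have h := pm_convex (F := F) (a := fun k => a k ^ t) (fun k => Real.rpow_nonneg (ha k) t) hp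
  have hsimp : ∀ k, (a k ^ t) ^ (1/t) = a k := by
    intro k
    rw [← Real.rpow_mul (ha k), mul_one_div_cancel ht0.ne', Real.rpow_one]
  simp only [hsimp] at h
  have hL0 : (0:ℝ) ≤ ∑ k ∈ F, a k ^ t :=
    Finset.sum_nonneg fun k _ => Real.rpow_nonneg (ha k) t
  have hR0 : (0:ℝ) ≤ (F.card : ℝ) ^ (1/t - 1) * ∑ k ∈ F, a k := by
    have : (0:ℝ) ≤ ∑ k ∈ F, a k := Finset.sum_nonneg fun k _ => ha k
    positivity
  have h2 : ((∑ k ∈ F, a k ^ t) ^ (1/t)) ^ t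
      ≤ ((F.card : ℝ) ^ (1/t - 1) * ∑ k ∈ F, a k) ^ t :=
    Real.rpow_le_rpow (Real.rpow_nonneg hL0 _) h ht0.le
  have h3 : ((∑ k ∈ F, a k ^ t) ^ (1/t)) ^ t = ∑ k ∈ F, a k ^ t := by
    rw [← Real.rpow_mul hL0, one_div_mul_cancel ht0.ne', Real.rpow_one]
  have h4 : ((F.card : ℝ) ^ (1/t - 1) * ∑ k ∈ F, a k) ^ t
      = (F.card : ℝ) ^ (1 - t) * (∑ k ∈ F, a k) ^ t := by
    rw [Real.mul_rpow (Real.rpow_nonneg (Nat.cast_nonneg _) _)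
      (Finset.sum_nonneg fun k _ => ha k), ← Real.rpow_mul (Nat.cast_nonneg _)]
    congr 2
    field_simp
  rw [h3, h4] at h2
  exact h2

end LqAux


namespace LqAux

variable {d : ℕ}

lemma measurable_rpow_const (f : Ed d → ℝ≥0∞) (hf : Measurable f) (t : ℝ) :
    Measurable (fun x => f x ^ t) :=
  ENNReal.continuous_rpow_const.measurable.comp hf

/-- Hölder: `ν A ≤ (∫_A f^s)^{1/s} (Λ A)^{1-1/s}`. -/
lemma holder_f (f : Ed d → ℝ≥0∞) (hf : Measurable f) {s : ℝ} (hs : 1 ≤ s) (A : Set (Ed d)) :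
    ∫⁻ x in A, f x ∂Lam d
      ≤ (∫⁻ x in A, f x ^ s ∂Lam d) ^ (1 / s) * (Lam d A) ^ (1 - 1 / s) := by
  rcases eq_or_lt_of_le hs with rfl | hs'
  · simp [ENNReal.rpow_one]
  · exact holder_aux f hf hs' A

/-- Reverse Jensen: `∫_A f^q ≤ (ν A)^q (Λ A)^{1-q}` for `0 < q < 1`. -/
lemma jensen_q (f : Ed d → ℝ≥0∞) (hf : Measurable f) {q : ℝ} (hq0 : 0 < q) (hq1 : q < 1)
    (A : Set (Ed d)) :
    ∫⁻ x in A, f x ^ q ∂Lam d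
      ≤ (∫⁻ x in A, f x ∂Lam d) ^ q * (Lam d A) ^ (1 - q) := by
  have hp : 1 < 1 / q := by rw [lt_div_iff₀ hq0]; linarith
  have h := holder_aux (fun x => f x ^ q) (measurable_rpow_const f hf q) hp A
  have h1 : ∀ x, (f x ^ q) ^ (1/q) = f x := by
    intro x
    rw [← ENNReal.rpow_mul, mul_one_div_cancel hq0.ne', ENNReal.rpow_one]
  simp only [h1, one_div_one_div] at h
  exact h

/-- If `ν = fΛ ≠ 0` then `∫ f^t > 0` for `t > 0`. -/
lemma lint_rpow_ne_zero (f : Ed d → ℝ≥0∞) (hf : Measurable f)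
    (hne : (Lam d).withDensity f ≠ 0) {t : ℝ} (ht : 0 < t) :
    ∫⁻ x, f x ^ t ∂Lam d ≠ 0 := by
  intro h0
  rw [lintegral_eq_zero_iff (measurable_rpow_const f hf t)] at h0
  apply hne
  have hf0 : f =ᵐ[Lam d] 0 := by
    filter_upwards [h0] with x hx
    simp only [Pi.zero_apply] at hx ⊢
    rcases ENNReal.rpow_eq_zero_iff.mp hx with ⟨h, _⟩ | ⟨_, hlt⟩
    · exact h
    · linarith
  rw [withDensity_congr_ae hf0, withDensity_zero]

lemma lint_rpow_ne_top (f : Ed d → ℝ≥0∞) (hf : Measurable f) {s : ℝ} (hs : 1 ≤ s)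
    (hfs : (∫⁻ x, f x ^ s ∂Lam d) < ⊤) {t : ℝ} (ht0 : 0 < t) (hts : t ≤ s) :
    ∫⁻ x, f x ^ t ∂Lam d ≠ ⊤ := by
  rcases eq_or_lt_of_le hts with rfl | hlt
  · exact hfs.ne
  have hp : 1 < s / t := by rw [lt_div_iff₀ ht0]; linarith
  have h := holder_aux (fun x => f x ^ t) (measurable_rpow_const f hf t) hp Set.univ
  have h1 : ∀ x, (f x ^ t) ^ (s/t) = f x ^ s := by
    intro x
    rw [← ENNReal.rpow_mul]
    congr 1
    field_simp
  simp only [h1, Measure.restrict_univ, setLIntegral_univ] at h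
  intro htop
  rw [htop] at h
  have hfin : (∫⁻ x, f x ^ s ∂Lam d) ^ (1 / (s / t)) * Lam d Set.univ ^ (1 - 1 / (s / t)) ≠ ⊤ := by
    apply ENNReal.mul_ne_top
    · exact ENNReal.rpow_ne_top_of_nonneg (by positivity) hfs.ne
    · apply ENNReal.rpow_ne_top_of_nonneg
      · have he : 1 / (s/t) = t/s := one_div_div s t
        have hle : t/s ≤ 1 := by
          rw [div_le_one (by linarith : (0:ℝ) < s)]; exact hts
        rw [he]; linarith
      · exact measure_ne_top _ _
  exact hfin (top_le_iff.mp h)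

end LqAux


namespace LqAux

variable {d : ℕ}

lemma tendsto_aux_zero (x : ℝ) :
    Tendsto (fun n : ℕ => x / ((n:ℝ) * Real.log 2)) atTop (𝓝 0) := by
  have heq : (fun n : ℕ => x / ((n:ℝ) * Real.log 2))
      = fun n : ℕ => (x / Real.log 2) * (1 / (n:ℝ)) := by
    funext n
    rw [mul_one_div, div_div, mul_comm (Real.log 2) (n:ℝ)]
  rw [heq]
  simpa using tendsto_one_div_atTop_nhds_zero_nat.const_mul (x / Real.log 2)

/-- Squeeze: if `c 2^{ne} ≤ S n ≤ C 2^{ne}` then `log S n / (n log 2) → e`. -/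
lemma tendsto_log_div {S : ℕ → ℝ} {e c C : ℝ} (hc : 0 < c)
    (hl : ∀ n : ℕ, c * (2:ℝ) ^ ((n:ℝ) * e) ≤ S n)
    (hu : ∀ n : ℕ, S n ≤ C * (2:ℝ) ^ ((n:ℝ) * e)) :
    Tendsto (fun n : ℕ => Real.log (S n) / ((n:ℝ) * Real.log 2)) atTop (𝓝 e) := by
  have hC : 0 < C := by
    have h0 := (hl 0).trans (hu 0)
    simp only [Nat.cast_zero, zero_mul, Real.rpow_zero, mul_one] at h0
    linarith
  have hlog2 : (0:ℝ) < Real.log 2 := Real.log_pos one_lt_two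
  have hSpos : ∀ n : ℕ, 0 < S n := fun n =>
    lt_of_lt_of_le (by positivity) (hl n)
  have hlow : Tendsto (fun n : ℕ => e + Real.log c / ((n:ℝ) * Real.log 2)) atTop (𝓝 e) := by
    have := (tendsto_const_nhds (x := e) (f := atTop (α := ℕ))).add (tendsto_aux_zero (Real.log c))
    simpa using this
  have hhigh : Tendsto (fun n : ℕ => e + Real.log C / ((n:ℝ) * Real.log 2)) atTop (𝓝 e) := by
    have := (tendsto_const_nhds (x := e) (f := atTop (α := ℕ))).add (tendsto_aux_zero (Real.log C))
    simpa using this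
  apply tendsto_of_tendsto_of_tendsto_of_le_of_le' hlow hhigh
  · filter_upwards [eventually_ge_atTop 1] with n hn
    have hnpos : (0:ℝ) < (n:ℝ) * Real.log 2 := by
      have : (0:ℝ) < (n:ℝ) := by exact_mod_cast hn
      positivity
    have hlog : Real.log c + (n:ℝ) * e * Real.log 2 ≤ Real.log (S n) := by
      have := Real.log_le_log (by positivity) (hl n)
      rwa [Real.log_mul hc.ne' (by positivity), Real.log_rpow two_pos] at this
    have : (Real.log c + (n:ℝ) * e * Real.log 2) / ((n:ℝ) * Real.log 2)
        = e + Real.log c / ((n:ℝ) * Real.log 2) := by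
      field_simp
      ring
    rw [← this]
    exact div_le_div_of_nonneg_right hlog hnpos.le
  · filter_upwards [eventually_ge_atTop 1] with n hn
    have hnpos : (0:ℝ) < (n:ℝ) * Real.log 2 := by
      have : (0:ℝ) < (n:ℝ) := by exact_mod_cast hn
      positivity
    have hlog : Real.log (S n) ≤ Real.log C + (n:ℝ) * e * Real.log 2 := by
      have := Real.log_le_log (hSpos n) (hu n)
      rwa [Real.log_mul hC.ne' (by positivity), Real.log_rpow two_pos] at this
    have heq : (Real.log C + (n:ℝ) * e * Real.log 2) / ((n:ℝ) * Real.log 2)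
        = e + Real.log C / ((n:ℝ) * Real.log 2) := by
      field_simp
      ring
    rw [← heq]
    exact div_le_div_of_nonneg_right hlog hnpos.le

/-- `(2^{nd})^t = 2^{(n:ℝ)(d t)}`. -/
lemma pow_rpow_conv (n : ℕ) (t : ℝ) :
    ((2:ℝ) ^ (n * d)) ^ t = (2:ℝ) ^ ((n:ℝ) * ((d:ℝ) * t)) := by
  rw [← Real.rpow_natCast 2 (n * d), ← Real.rpow_mul (by norm_num)]
  congr 1
  push_cast
  ring

end LqAux


namespace LqAux

variable {d : ℕ}

lemma sum_toReal_cubes (g : Ed d → ℝ≥0∞)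
    (hfin : ((Lam d).withDensity g) Set.univ ≠ ⊤) (n : ℕ) :
    ∑ k ∈ idx d n, (((Lam d).withDensity g) (dyadicCube d n k)).toReal
      = (((Lam d).withDensity g) Set.univ).toReal := by
  rw [← withDensity_Q_eq_univ, measure_Qcube_sum ((Lam d).withDensity g) n,
    ENNReal.toReal_sum]
  intro k _
  exact ne_top_of_le_ne_top hfin (measure_mono (Set.subset_univ _))

lemma vol_toReal {n : ℕ} {k : Fin d → ℤ} (hk : k ∈ idx d n) :
    (Lam d (dyadicCube d n k)).toReal = ((2:ℝ) ^ n)⁻¹ ^ d := by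
  rw [Lam_dyadicCube hk, ENNReal.toReal_ofReal (by positivity)]

lemma vol_eq_X (n : ℕ) : ((2:ℝ) ^ n)⁻¹ ^ d = ((2:ℝ) ^ (n * d))⁻¹ := by
  rw [inv_pow, pow_mul]

/-- Real-valued Hölder estimate on a dyadic cube. -/
lemma real_holder_cube (f : Ed d → ℝ≥0∞) (hf : Measurable f) {s : ℝ} (hs : 1 ≤ s)
    (hfs : (∫⁻ x, f x ^ s ∂Lam d) ≠ ⊤) {n : ℕ} {k : Fin d → ℤ} (hk : k ∈ idx d n) :
    (((Lam d).withDensity f) (dyadicCube d n k)).toReal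
      ≤ ((((Lam d).withDensity (fun x => f x ^ s)) (dyadicCube d n k)).toReal) ^ (1/s)
        * (((2:ℝ) ^ n)⁻¹ ^ d) ^ (1 - 1/s) := by
  have hs0 : (0:ℝ) < s := lt_of_lt_of_le one_pos hs
  have hmeas := measurableSet_dyadicCube (d := d) n k
  have hE := holder_f f hf hs (dyadicCube d n k)
  rw [← withDensity_apply f hmeas, ← withDensity_apply _ hmeas] at hE
  have hμs_fin : ((Lam d).withDensity (fun x => f x ^ s)) (dyadicCube d n k) ≠ ⊤ := by
    refine ne_top_of_le_ne_top ?_ (measure_mono (Set.subset_univ _))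
    rw [withDensity_apply _ MeasurableSet.univ, Measure.restrict_univ]
    exact hfs
  have hR_fin : (((Lam d).withDensity (fun x => f x ^ s)) (dyadicCube d n k)) ^ (1/s)
      * (Lam d (dyadicCube d n k)) ^ (1 - 1/s) ≠ ⊤ :=
    ENNReal.mul_ne_top (ENNReal.rpow_ne_top_of_nonneg (by positivity) hμs_fin)
      (ENNReal.rpow_ne_top_of_nonneg (by
        have : 1/s ≤ 1 := by
          rw [div_le_one hs0]; exact hs
        linarith) (Lam_ne_top _))
  have := ENNReal.toReal_mono hR_fin hE
  rwa [ENNReal.toReal_mul, ← ENNReal.toReal_rpow, ← ENNReal.toReal_rpow, vol_toReal hk]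
    at this

/-- Real-valued reverse Jensen estimate on a dyadic cube, `0 < q < 1`. -/
lemma real_jensen_cube (f : Ed d → ℝ≥0∞) (hf : Measurable f)
    (hν_fin : ((Lam d).withDensity f) Set.univ ≠ ⊤)
    {q : ℝ} (hq0 : 0 < q) (hq1 : q < 1) {n : ℕ} {k : Fin d → ℤ} (hk : k ∈ idx d n) :
    (((Lam d).withDensity (fun x => f x ^ q)) (dyadicCube d n k)).toReal
      ≤ ((((Lam d).withDensity f) (dyadicCube d n k)).toReal) ^ q
        * (((2:ℝ) ^ n)⁻¹ ^ d) ^ (1 - q) := by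
  have hmeas := measurableSet_dyadicCube (d := d) n k
  have hE := jensen_q f hf hq0 hq1 (dyadicCube d n k)
  rw [← withDensity_apply f hmeas, ← withDensity_apply _ hmeas] at hE
  have hν_cube_fin : ((Lam d).withDensity f) (dyadicCube d n k) ≠ ⊤ :=
    ne_top_of_le_ne_top hν_fin (measure_mono (Set.subset_univ _))
  have hR_fin : (((Lam d).withDensity f) (dyadicCube d n k)) ^ q
      * (Lam d (dyadicCube d n k)) ^ (1 - q) ≠ ⊤ :=
    ENNReal.mul_ne_top (ENNReal.rpow_ne_top_of_nonneg hq0.le hν_cube_fin)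
      (ENNReal.rpow_ne_top_of_nonneg (by linarith) (Lam_ne_top _))
  have := ENNReal.toReal_mono hR_fin hE
  rwa [ENNReal.toReal_mul, ← ENNReal.toReal_rpow, ← ENNReal.toReal_rpow, vol_toReal hk]
    at this

end LqAux


namespace LqAux

variable {d : ℕ}

lemma nu_univ_ne_top (f : Ed d → ℝ≥0∞) (hf : Measurable f) {s : ℝ} (hs : 1 ≤ s)
    (hfs : (∫⁻ x, f x ^ s ∂Lam d) < ⊤) :
    ((Lam d).withDensity f) Set.univ ≠ ⊤ := by
  rw [withDensity_apply _ MeasurableSet.univ, Measure.restrict_univ]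
  have h := holder_f f hf hs Set.univ
  simp only [Measure.restrict_univ, setLIntegral_univ] at h
  intro htop
  rw [htop] at h
  have hfin : (∫⁻ x, f x ^ s ∂Lam d) ^ (1/s) * Lam d Set.univ ^ (1 - 1/s) ≠ ⊤ := by
    have hs0 : (0:ℝ) < s := lt_of_lt_of_le one_pos hs
    apply ENNReal.mul_ne_top
    · exact ENNReal.rpow_ne_top_of_nonneg (by positivity) hfs.ne
    · apply ENNReal.rpow_ne_top_of_nonneg ?_ (measure_ne_top _ _)
      have : 1/s ≤ 1 := by rw [div_le_one hs0]; exact hs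
      linarith
  exact hfin (top_le_iff.mp h)

lemma card_idx_cast (n : ℕ) : (((idx d n).card : ℝ)) = (2:ℝ) ^ (n * d) := by
  rw [card_idx]
  push_cast
  ring

/-- Upper bound for the `L^q` partition sum, `0 < q ≤ s`. -/
lemma Sb_upper (f : Ed d → ℝ≥0∞) (hf : Measurable f) {s : ℝ} (hs : 1 ≤ s)
    (hfs : (∫⁻ x, f x ^ s ∂Lam d) < ⊤) {q : ℝ} (hq0 : 0 < q) (hqs : q ≤ s) (n : ℕ) :
    ∑ k ∈ (idx d n).filter
        (fun k => 0 < ((Lam d).withDensity f) (dyadicCube d n k)),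
        ((((Lam d).withDensity f) (dyadicCube d n k)).toReal) ^ q
      ≤ (∫⁻ x, f x ^ s ∂Lam d).toReal ^ (q/s) * ((2:ℝ) ^ (n * d)) ^ (1 - q) := by
  have hs0 : (0:ℝ) < s := lt_of_lt_of_le one_pos hs
  set X : ℝ := (2:ℝ) ^ (n * d) with hXdef
  have hX : (0:ℝ) < X := by positivity
  set BsR : ℝ := (∫⁻ x, f x ^ s ∂Lam d).toReal with hBsRdef
  have hBsR0 : 0 ≤ BsR := ENNReal.toReal_nonneg
  set μs : Measure (Ed d) := (Lam d).withDensity (fun x => f x ^ s) with hμsdef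
  have hμs_univ : μs Set.univ = ∫⁻ x, f x ^ s ∂Lam d := by
    rw [hμsdef, withDensity_apply _ MeasurableSet.univ, Measure.restrict_univ]
  set a : (Fin d → ℤ) → ℝ := fun k => (((Lam d).withDensity f) (dyadicCube d n k)).toReal
    with hadef
  set b : (Fin d → ℤ) → ℝ := fun k => (μs (dyadicCube d n k)).toReal with hbdef
  have ha_nonneg : ∀ k, 0 ≤ a k := fun k => ENNReal.toReal_nonneg
  have hb_nonneg : ∀ k, 0 ≤ b k := fun k => ENNReal.toReal_nonneg
  set t : ℝ := (1/s) * q with htdef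
  have ht0 : 0 < t := by positivity
  have ht1 : t ≤ 1 := by
    rw [htdef]
    rw [one_div, inv_mul_le_iff₀ hs0, mul_one]
    exact hqs
  have hsub : ∑ k ∈ (idx d n).filter
        (fun k => 0 < ((Lam d).withDensity f) (dyadicCube d n k)), a k ^ q
      ≤ ∑ k ∈ idx d n, a k ^ q :=
    Finset.sum_le_sum_of_subset_of_nonneg (Finset.filter_subset _ _)
      (fun k _ _ => Real.rpow_nonneg (ha_nonneg k) q)
  have hterm : ∀ k ∈ idx d n,
      a k ^ q ≤ b k ^ t * (((2:ℝ) ^ n)⁻¹ ^ d) ^ ((1 - 1/s) * q) := by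
    intro k hk
    calc a k ^ q ≤ (b k ^ (1/s) * (((2:ℝ) ^ n)⁻¹ ^ d) ^ (1 - 1/s)) ^ q :=
          Real.rpow_le_rpow (ha_nonneg k) (real_holder_cube f hf hs hfs.ne hk) hq0.le
      _ = b k ^ t * (((2:ℝ) ^ n)⁻¹ ^ d) ^ ((1 - 1/s) * q) := by
          rw [Real.mul_rpow (Real.rpow_nonneg (hb_nonneg k) _)
              (Real.rpow_nonneg (by positivity) _),
            ← Real.rpow_mul (hb_nonneg k), ← Real.rpow_mul (by positivity)]
  have hsum2 : ∑ k ∈ idx d n, a k ^ q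
      ≤ (∑ k ∈ idx d n, b k ^ t) * (((2:ℝ) ^ n)⁻¹ ^ d) ^ ((1 - 1/s) * q) := by
    rw [Finset.sum_mul]
    exact Finset.sum_le_sum hterm
  have hbsum : ∑ k ∈ idx d n, b k = BsR := by
    rw [hbdef, hBsRdef, ← hμs_univ]
    exact sum_toReal_cubes _ (by rw [hμs_univ]; exact hfs.ne) n
  have hpm : ∑ k ∈ idx d n, b k ^ t ≤ X ^ (1 - t) * BsR ^ t := by
    have := pm_concave (F := idx d n) (a := b) hb_nonneg ht0 ht1
    rwa [card_idx_cast, hbsum] at this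
  have hXe : ∀ e : ℝ, ((((2:ℝ) ^ n)⁻¹ ^ d : ℝ)) ^ e = X ^ (-e) := by
    intro e
    rw [vol_eq_X, ← hXdef, Real.inv_rpow hX.le, ← Real.rpow_neg hX.le]
  have hfinal : X ^ (1 - t) * BsR ^ t * (((2:ℝ) ^ n)⁻¹ ^ d) ^ ((1 - 1/s) * q)
      = BsR ^ (q/s) * X ^ (1 - q) := by
    rw [hXe]
    calc X ^ (1 - t) * BsR ^ t * X ^ (-((1 - 1/s) * q))
        = BsR ^ t * (X ^ (1 - t) * X ^ (-((1 - 1/s) * q))) := by ring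
      _ = BsR ^ t * X ^ ((1 - t) + -((1 - 1/s) * q)) := by rw [← Real.rpow_add hX]
      _ = BsR ^ (q/s) * X ^ (1 - q) := by
          rw [show t = q/s by rw [htdef]; ring,
            show (1 - q/s) + -((1 - 1/s) * q) = 1 - q by ring]
  calc ∑ k ∈ (idx d n).filter
        (fun k => 0 < ((Lam d).withDensity f) (dyadicCube d n k)), a k ^ q
      ≤ ∑ k ∈ idx d n, a k ^ q := hsub
    _ ≤ (∑ k ∈ idx d n, b k ^ t) * (((2:ℝ) ^ n)⁻¹ ^ d) ^ ((1 - 1/s) * q) := hsum2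
    _ ≤ (X ^ (1 - t) * BsR ^ t) * (((2:ℝ) ^ n)⁻¹ ^ d) ^ ((1 - 1/s) * q) := by
        apply mul_le_mul_of_nonneg_right hpm (by positivity)
    _ = BsR ^ (q/s) * X ^ (1 - q) := hfinal

end LqAux


namespace LqAux

variable {d : ℕ}

lemma sum_filter_eq_sum_idx (f : Ed d → ℝ≥0∞) {q : ℝ} (hq0 : 0 < q) (n : ℕ) :
    ∑ k ∈ (idx d n).filter
        (fun k => 0 < ((Lam d).withDensity f) (dyadicCube d n k)),
        ((((Lam d).withDensity f) (dyadicCube d n k)).toReal) ^ q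
      = ∑ k ∈ idx d n, ((((Lam d).withDensity f) (dyadicCube d n k)).toReal) ^ q := by
  apply Finset.sum_filter_of_ne
  intro k hk hne
  rcases eq_or_lt_of_le (show (0:ℝ≥0∞) ≤ ((Lam d).withDensity f) (dyadicCube d n k) from zero_le) with h | h
  · exfalso
    apply hne
    rw [← h, ENNReal.toReal_zero, Real.zero_rpow hq0.ne']
  · exact h

/-- Lower bound for the `L^q` partition sum, `1 ≤ q ≤ s`. -/
lemma Sb_lower_ge1 (f : Ed d → ℝ≥0∞) (hf : Measurable f) {s : ℝ} (hs : 1 ≤ s)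
    (hfs : (∫⁻ x, f x ^ s ∂Lam d) < ⊤) {q : ℝ} (hq1 : 1 ≤ q) (n : ℕ) :
    (((Lam d).withDensity f) Set.univ).toReal ^ q * ((2:ℝ) ^ (n * d)) ^ (1 - q)
      ≤ ∑ k ∈ (idx d n).filter
          (fun k => 0 < ((Lam d).withDensity f) (dyadicCube d n k)),
          ((((Lam d).withDensity f) (dyadicCube d n k)).toReal) ^ q := by
  have hq0 : (0:ℝ) < q := lt_of_lt_of_le one_pos hq1
  set X : ℝ := (2:ℝ) ^ (n * d) with hXdef
  have hX : (0:ℝ) < X := by positivity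
  have hν_fin := nu_univ_ne_top f hf hs hfs
  set a : (Fin d → ℤ) → ℝ := fun k => (((Lam d).withDensity f) (dyadicCube d n k)).toReal
    with hadef
  have ha_nonneg : ∀ k, 0 ≤ a k := fun k => ENNReal.toReal_nonneg
  have hasum : ∑ k ∈ idx d n, a k = (((Lam d).withDensity f) Set.univ).toReal :=
    sum_toReal_cubes f hν_fin n
  have key : (((Lam d).withDensity f) Set.univ).toReal ^ q
      ≤ X ^ (q - 1) * ∑ k ∈ idx d n, a k ^ q := by
    have := pm_convex (F := idx d n) (a := a) ha_nonneg hq1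
    rwa [card_idx_cast, hasum] at this
  have hX1 : X ^ (q - 1) * X ^ (1 - q) = 1 := by
    rw [← Real.rpow_add hX]
    norm_num
  rw [sum_filter_eq_sum_idx f hq0 n]
  calc (((Lam d).withDensity f) Set.univ).toReal ^ q * X ^ (1 - q)
      ≤ (X ^ (q - 1) * ∑ k ∈ idx d n, a k ^ q) * X ^ (1 - q) :=
        mul_le_mul_of_nonneg_right key (by positivity)
    _ = (∑ k ∈ idx d n, a k ^ q) * (X ^ (q - 1) * X ^ (1 - q)) := by ring
    _ = ∑ k ∈ idx d n, a k ^ q := by rw [hX1, mul_one]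

/-- Lower bound for the `L^q` partition sum, `0 < q < 1`. -/
lemma Sb_lower_lt1 (f : Ed d → ℝ≥0∞) (hf : Measurable f) {s : ℝ} (hs : 1 ≤ s)
    (hfs : (∫⁻ x, f x ^ s ∂Lam d) < ⊤) {q : ℝ} (hq0 : 0 < q) (hq1 : q < 1) (n : ℕ) :
    (∫⁻ x, f x ^ q ∂Lam d).toReal * ((2:ℝ) ^ (n * d)) ^ (1 - q)
      ≤ ∑ k ∈ (idx d n).filter
          (fun k => 0 < ((Lam d).withDensity f) (dyadicCube d n k)),
          ((((Lam d).withDensity f) (dyadicCube d n k)).toReal) ^ q := by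
  set X : ℝ := (2:ℝ) ^ (n * d) with hXdef
  have hX : (0:ℝ) < X := by positivity
  have hν_fin := nu_univ_ne_top f hf hs hfs
  set μq : Measure (Ed d) := (Lam d).withDensity (fun x => f x ^ q) with hμqdef
  have hμq_univ : μq Set.univ = ∫⁻ x, f x ^ q ∂Lam d := by
    rw [hμqdef, withDensity_apply _ MeasurableSet.univ, Measure.restrict_univ]
  have hμq_fin : μq Set.univ ≠ ⊤ := by
    rw [hμq_univ]
    exact lint_rpow_ne_top f hf hs hfs hq0 (le_of_lt (lt_of_lt_of_le hq1 hs))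
  set a : (Fin d → ℤ) → ℝ := fun k => (((Lam d).withDensity f) (dyadicCube d n k)).toReal
    with hadef
  have ha_nonneg : ∀ k, 0 ≤ a k := fun k => ENNReal.toReal_nonneg
  have hterm : ∀ k ∈ idx d n,
      (μq (dyadicCube d n k)).toReal ≤ a k ^ q * (((2:ℝ) ^ n)⁻¹ ^ d) ^ (1 - q) :=
    fun k hk => real_jensen_cube f hf hν_fin hq0 hq1 hk
  have hgsum : ∑ k ∈ idx d n, (μq (dyadicCube d n k)).toReal
      = (∫⁻ x, f x ^ q ∂Lam d).toReal := by
    rw [← hμq_univ]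
    exact sum_toReal_cubes _ hμq_fin n
  have hkey : (∫⁻ x, f x ^ q ∂Lam d).toReal
      ≤ (∑ k ∈ idx d n, a k ^ q) * (((2:ℝ) ^ n)⁻¹ ^ d) ^ (1 - q) := by
    rw [← hgsum, Finset.sum_mul]
    exact Finset.sum_le_sum hterm
  have hXe : ((((2:ℝ) ^ n)⁻¹ ^ d : ℝ)) ^ (1 - q) = X ^ (-(1 - q)) := by
    rw [vol_eq_X, ← hXdef, Real.inv_rpow hX.le, ← Real.rpow_neg hX.le]
  have hX1 : X ^ (-(1 - q)) * X ^ (1 - q) = 1 := by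
    rw [← Real.rpow_add hX]
    norm_num
  rw [sum_filter_eq_sum_idx f hq0 n]
  calc (∫⁻ x, f x ^ q ∂Lam d).toReal * X ^ (1 - q)
      ≤ ((∑ k ∈ idx d n, a k ^ q) * (((2:ℝ) ^ n)⁻¹ ^ d) ^ (1 - q)) * X ^ (1 - q) :=
        mul_le_mul_of_nonneg_right hkey (by positivity)
    _ = (∑ k ∈ idx d n, a k ^ q) * (X ^ (-(1 - q)) * X ^ (1 - q)) := by rw [hXe]; ring
    _ = ∑ k ∈ idx d n, a k ^ q := by rw [hX1, mul_one]

end LqAux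


namespace LqAux

variable {d : ℕ}

lemma volume_inter_cube_eq_zero (f : Ed d → ℝ≥0∞) (hf : Measurable f) {n : ℕ}
    {k : Fin d → ℤ} (hk : k ∈ idx d n)
    (hz : ((Lam d).withDensity f) (dyadicCube d n k) = 0) :
    Lam d ({x | 0 < f x} ∩ dyadicCube d n k) = 0 := by
  rw [withDensity_apply f (measurableSet_dyadicCube n k)] at hz
  have hae : ∀ᵐ x ∂((Lam d).restrict (dyadicCube d n k)), f x = 0 := by
    have := (lintegral_eq_zero_iff hf).mp hz
    filter_upwards [this] with x hx using hx
  have h0 : ((Lam d).restrict (dyadicCube d n k)) {x | ¬ f x = 0} = 0 := by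
    rw [← ae_iff]
    exact hae
  have hsub : {x : Ed d | 0 < f x} ⊆ {x : Ed d | ¬ f x = 0} := by
    intro x hx
    simp only [Set.mem_setOf_eq] at hx ⊢
    exact (pos_iff_ne_zero.mp hx)
  have := measure_mono_null hsub h0
  rwa [Measure.restrict_apply (measurableSet_lt measurable_const hf)] at this

lemma Lam_posset_le_card (f : Ed d → ℝ≥0∞) (hf : Measurable f) (n : ℕ) :
    (Lam d {x | 0 < f x}).toReal
      ≤ ((((idx d n).filter
          (fun k => 0 < ((Lam d).withDensity f) (dyadicCube d n k))).card : ℝ))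
        * ((2:ℝ) ^ n)⁻¹ ^ d := by
  have hA : MeasurableSet {x : Ed d | 0 < f x} := measurableSet_lt measurable_const hf
  set A := {x : Ed d | 0 < f x} with hAdef
  have hsplit : Lam d A = ∑ k ∈ idx d n, Lam d (A ∩ dyadicCube d n k) := by
    have hAQ : A ∩ Qcube d = ⋃ k ∈ idx d n, (A ∩ dyadicCube d n k) := by
      rw [← Qcube_eq_biUnion n]
      ext x
      simp only [Set.mem_inter_iff, Set.mem_iUnion]
      tauto
    have h1 : Lam d A = Lam d (A ∩ Qcube d) := by
      rw [Lam, Measure.restrict_apply hA,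
        Measure.restrict_apply (hA.inter measurableSet_Qcube)]
      congr 1
      rw [Set.inter_assoc, Set.inter_self]
    rw [h1, hAQ, measure_biUnion_finset]
    · intro k hk k' hk' hkk
      exact (dyadicCube_disjoint hkk).mono Set.inter_subset_right Set.inter_subset_right
    · intro k hk
      exact hA.inter (measurableSet_dyadicCube n k)
  have hfilter : ∑ k ∈ idx d n, Lam d (A ∩ dyadicCube d n k)
      = ∑ k ∈ (idx d n).filter
          (fun k => 0 < ((Lam d).withDensity f) (dyadicCube d n k)),
          Lam d (A ∩ dyadicCube d n k) := by
    symm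
    apply Finset.sum_filter_of_ne
    intro k hk hne
    rcases eq_or_lt_of_le (show (0:ℝ≥0∞) ≤ ((Lam d).withDensity f) (dyadicCube d n k) from zero_le) with h | h
    · exact absurd (volume_inter_cube_eq_zero f hf hk h.symm) hne
    · exact h
  have hbound : ∑ k ∈ (idx d n).filter
        (fun k => 0 < ((Lam d).withDensity f) (dyadicCube d n k)),
        Lam d (A ∩ dyadicCube d n k)
      ≤ (((idx d n).filter
          (fun k => 0 < ((Lam d).withDensity f) (dyadicCube d n k))).card : ℕ)
        • ENNReal.ofReal (((2:ℝ) ^ n)⁻¹ ^ d) := by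
    rw [← Finset.sum_const]
    apply Finset.sum_le_sum
    intro k hk
    have hkidx : k ∈ idx d n := Finset.mem_of_mem_filter k hk
    calc Lam d (A ∩ dyadicCube d n k) ≤ Lam d (dyadicCube d n k) :=
          measure_mono Set.inter_subset_right
      _ = ENNReal.ofReal (((2:ℝ) ^ n)⁻¹ ^ d) := Lam_dyadicCube hkidx
  have h2 : Lam d A ≤ (((idx d n).filter
      (fun k => 0 < ((Lam d).withDensity f) (dyadicCube d n k))).card : ℕ)
        • ENNReal.ofReal (((2:ℝ) ^ n)⁻¹ ^ d) := by
    rw [hsplit, hfilter]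
    exact hbound
  rw [nsmul_eq_mul] at h2
  have hfin : ((((idx d n).filter
      (fun k => 0 < ((Lam d).withDensity f) (dyadicCube d n k))).card : ℝ≥0∞))
        * ENNReal.ofReal (((2:ℝ) ^ n)⁻¹ ^ d) ≠ ⊤ :=
    ENNReal.mul_ne_top (ENNReal.natCast_ne_top _) ENNReal.ofReal_ne_top
  have h3 := ENNReal.toReal_mono hfin h2
  rwa [ENNReal.toReal_mul, ENNReal.toReal_natCast,
    ENNReal.toReal_ofReal (by positivity)] at h3

end LqAux


namespace LqAux

variable {d : ℕ}

lemma Lam_posset_pos (f : Ed d → ℝ≥0∞) (hf : Measurable f)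
    (hne : (Lam d).withDensity f ≠ 0) :
    0 < (Lam d {x | 0 < f x}).toReal := by
  apply ENNReal.toReal_pos ?_ (measure_ne_top _ _)
  intro h0
  apply hne
  have hae : f =ᵐ[Lam d] 0 := by
    rw [Filter.EventuallyEq, ae_iff]
    have heq : {x : Ed d | ¬ f x = (0 : Ed d → ℝ≥0∞) x} = {x : Ed d | 0 < f x} := by
      ext x
      simp [pos_iff_ne_zero]
    rw [heq]
    exact h0
  rw [withDensity_congr_ae hae, withDensity_zero]

lemma card_filter_le (f : Ed d → ℝ≥0∞) (n : ℕ) :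
    ((((idx d n).filter
        (fun k => 0 < ((Lam d).withDensity f) (dyadicCube d n k))).card : ℝ))
      ≤ (2:ℝ) ^ (n * d) := by
  rw [← card_idx_cast]
  exact_mod_cast Finset.card_filter_le _ _

/-- Consolidated two-sided bounds on the `L^q` partition sums. -/
lemma Sb_bounds (hd : 0 < d) (f : Ed d → ℝ≥0∞) (hf : Measurable f) {s : ℝ} (hs : 1 ≤ s)
    (hfs : (∫⁻ x, f x ^ s ∂Lam d) < ⊤) (hne : (Lam d).withDensity f ≠ 0)
    {q : ℝ} (hq0 : 0 ≤ q) (hqs : q ≤ s) :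
    ∃ c C : ℝ, 0 < c ∧ ∀ n : ℕ,
      (c * ((2:ℝ) ^ (n * d)) ^ (1 - q)
          ≤ ∑ k ∈ (idx d n).filter
              (fun k => 0 < ((Lam d).withDensity f) (dyadicCube d n k)),
              ((((Lam d).withDensity f) (dyadicCube d n k)).toReal) ^ q)
      ∧ (∑ k ∈ (idx d n).filter
              (fun k => 0 < ((Lam d).withDensity f) (dyadicCube d n k)),
              ((((Lam d).withDensity f) (dyadicCube d n k)).toReal) ^ q
          ≤ C * ((2:ℝ) ^ (n * d)) ^ (1 - q)) := by
  have hs0 : (0:ℝ) < s := lt_of_lt_of_le one_pos hs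
  rcases eq_or_lt_of_le hq0 with rfl | hq0'
  -- q = 0
  · refine ⟨(Lam d {x | 0 < f x}).toReal, 1, Lam_posset_pos f hf hne, fun n => ?_⟩
    have hX : (0:ℝ) < (2:ℝ) ^ (n * d) := by positivity
    have hsum : ∑ k ∈ (idx d n).filter
        (fun k => 0 < ((Lam d).withDensity f) (dyadicCube d n k)),
        ((((Lam d).withDensity f) (dyadicCube d n k)).toReal) ^ (0:ℝ)
        = ((((idx d n).filter
            (fun k => 0 < ((Lam d).withDensity f) (dyadicCube d n k))).card : ℝ)) := by
      rw [Finset.sum_congr rfl (fun k _ => Real.rpow_zero _), Finset.sum_const,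
        nsmul_eq_mul, mul_one]
    rw [hsum]
    have hXq : ((2:ℝ) ^ (n * d)) ^ ((1:ℝ) - 0) = (2:ℝ) ^ (n * d) := by
      norm_num
    rw [hXq]
    constructor
    · have h1 := Lam_posset_le_card f hf n
      have h2 : (Lam d {x | 0 < f x}).toReal * (2:ℝ) ^ (n*d)
          ≤ (((((idx d n).filter
            (fun k => 0 < ((Lam d).withDensity f) (dyadicCube d n k))).card : ℝ))
            * ((2:ℝ) ^ n)⁻¹ ^ d) * (2:ℝ) ^ (n*d) :=
        mul_le_mul_of_nonneg_right h1 hX.le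
      calc (Lam d {x | 0 < f x}).toReal * (2:ℝ) ^ (n*d)
          ≤ (((((idx d n).filter
              (fun k => 0 < ((Lam d).withDensity f) (dyadicCube d n k))).card : ℝ))
              * ((2:ℝ) ^ n)⁻¹ ^ d) * (2:ℝ) ^ (n*d) := h2
        _ = ((((idx d n).filter
              (fun k => 0 < ((Lam d).withDensity f) (dyadicCube d n k))).card : ℝ)) := by
            rw [vol_eq_X]
            field_simp
    · rw [one_mul]
      exact card_filter_le f n
  -- q > 0
  rcases lt_or_ge q 1 with hq1 | hq1
  · exact ⟨(∫⁻ x, f x ^ q ∂Lam d).toReal, (∫⁻ x, f x ^ s ∂Lam d).toReal ^ (q/s),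
      ENNReal.toReal_pos (lint_rpow_ne_zero f hf hne hq0')
        (lint_rpow_ne_top f hf hs hfs hq0' hqs),
      fun n => ⟨Sb_lower_lt1 f hf hs hfs hq0' hq1 n, Sb_upper f hf hs hfs hq0' hqs n⟩⟩
  · refine ⟨(((Lam d).withDensity f) Set.univ).toReal ^ q,
      (∫⁻ x, f x ^ s ∂Lam d).toReal ^ (q/s), ?_, fun n =>
        ⟨Sb_lower_ge1 f hf hs hfs hq1 n, Sb_upper f hf hs hfs hq0' hqs n⟩⟩
    apply Real.rpow_pos_of_pos
    apply ENNReal.toReal_pos ?_ (nu_univ_ne_top f hf hs hfs)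
    intro h0
    exact hne (Measure.measure_univ_eq_zero.mp h0)

/-- The sequence `β_{ν,n}(q)` converges to `d(1-q)`. -/
lemma betaN_tendsto (hd : 0 < d) (f : Ed d → ℝ≥0∞) (hf : Measurable f) {s : ℝ} (hs : 1 ≤ s)
    (hfs : (∫⁻ x, f x ^ s ∂Lam d) < ⊤) (ν : Measure (Ed d))
    (hν : ν = (Lam d).withDensity f) (hne : ν ≠ 0)
    {q : ℝ} (hq0 : 0 ≤ q) (hqs : q ≤ s) :
    Tendsto (betaN d ν q) atTop (𝓝 ((d:ℝ) * (1 - q))) := by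
  subst hν
  obtain ⟨c, C, hc, hbounds⟩ := Sb_bounds hd f hf hs hfs hne hq0 hqs
  have hconv : ∀ n : ℕ, ((2:ℝ) ^ (n * d)) ^ (1 - q)
      = (2:ℝ) ^ ((n:ℝ) * ((d:ℝ) * (1 - q))) := fun n => pow_rpow_conv n (1 - q)
  apply tendsto_log_div hc (C := C)
  · intro n
    rw [← hconv n]
    exact (hbounds n).1
  · intro n
    rw [← hconv n]
    exact (hbounds n).2

end LqAux


namespace LqAux

variable {d : ℕ}

/-- The defining set of `Jf`. -/
def Jset (ν : Measure (Ed d)) (r : ℝ) (Q : Set (Ed d)) : Set ℝ :=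
  {v : ℝ | ∃ Q' ∈ Ddy d, Q' ⊆ Q ∧ v = (ν Q').toReal * (Lam d Q').toReal ^ (r / (d:ℝ))}

lemma Jf_eq_sSup (ν : Measure (Ed d)) (r : ℝ) (Q : Set (Ed d)) :
    Jf d ν r Q = sSup (Jset ν r Q) := rfl

lemma Jset_nonempty {n : ℕ} {k : Fin d → ℤ} (hk : k ∈ idx d n) (ν : Measure (Ed d)) (r : ℝ) :
    ((ν (dyadicCube d n k)).toReal * (Lam d (dyadicCube d n k)).toReal ^ (r / (d:ℝ)))
      ∈ Jset ν r (dyadicCube d n k) :=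
  ⟨dyadicCube d n k, dyadicCube_mem_Ddy hk, subset_rfl, rfl⟩

/-- Uniform bound on the elements of `Jset`. -/
lemma Jset_elem_le (hd : 0 < d) (f : Ed d → ℝ≥0∞) (hf : Measurable f) {s : ℝ} (hs : 1 ≤ s)
    (hfs : (∫⁻ x, f x ^ s ∂Lam d) < ⊤) {r : ℝ} (hr : (d:ℝ) / s - d ≤ r)
    {n : ℕ} {k : Fin d → ℤ} (hk : k ∈ idx d n) :
    ∀ v ∈ Jset ((Lam d).withDensity f) r (dyadicCube d n k),
      v ≤ ((((Lam d).withDensity (fun x => f x ^ s)) (dyadicCube d n k)).toReal) ^ (1/s)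
          * (((2:ℝ) ^ n)⁻¹ ^ d) ^ (1 - 1/s + r / (d:ℝ)) := by
  have hs0 : (0:ℝ) < s := lt_of_lt_of_le one_pos hs
  have hd0 : (0:ℝ) < (d:ℝ) := by exact_mod_cast hd
  have hc' : 0 ≤ 1 - 1/s + r / (d:ℝ) := by
    have h2 : 1/s - 1 ≤ r / (d:ℝ) := by
      rw [le_div_iff₀ hd0]
      calc (1/s - 1) * d = (d:ℝ)/s - d := by ring
        _ ≤ r := hr
    linarith
  rintro v ⟨Q', hQ', hsub, rfl⟩
  obtain ⟨m, k', hk', rfl⟩ := mem_Ddy_iff.mp hQ'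
  have hvolm_pos : (0:ℝ) < ((2:ℝ) ^ m)⁻¹ ^ d := by positivity
  have hvoln_pos : (0:ℝ) < ((2:ℝ) ^ n)⁻¹ ^ d := by positivity
  have hμs_fin : ((Lam d).withDensity (fun x => f x ^ s)) Set.univ ≠ ⊤ := by
    rw [withDensity_apply _ MeasurableSet.univ, Measure.restrict_univ]
    exact hfs.ne
  -- Hölder on the subcube
  have hH := real_holder_cube f hf hs hfs.ne hk'
  have hLam' : (Lam d (dyadicCube d m k')).toReal = ((2:ℝ) ^ m)⁻¹ ^ d := vol_toReal hk'
  have hmono_vol : ((2:ℝ) ^ m)⁻¹ ^ d ≤ ((2:ℝ) ^ n)⁻¹ ^ d := by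
    have h1 : Lam d (dyadicCube d m k') ≤ Lam d (dyadicCube d n k) := measure_mono hsub
    have h2 := ENNReal.toReal_mono (Lam_ne_top _) h1
    rwa [hLam', vol_toReal hk] at h2
  have hmono_mus : (((Lam d).withDensity (fun x => f x ^ s)) (dyadicCube d m k')).toReal
      ≤ (((Lam d).withDensity (fun x => f x ^ s)) (dyadicCube d n k)).toReal := by
    apply ENNReal.toReal_mono
    · exact ne_top_of_le_ne_top hμs_fin (measure_mono (Set.subset_univ _))
    · exact measure_mono hsub
  calc (((Lam d).withDensity f) (dyadicCube d m k')).toReal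
          * (Lam d (dyadicCube d m k')).toReal ^ (r / (d:ℝ))
      ≤ ((((Lam d).withDensity (fun x => f x ^ s)) (dyadicCube d m k')).toReal ^ (1/s)
          * (((2:ℝ) ^ m)⁻¹ ^ d) ^ (1 - 1/s))
          * (((2:ℝ) ^ m)⁻¹ ^ d) ^ (r / (d:ℝ)) := by
        rw [hLam']
        exact mul_le_mul_of_nonneg_right hH (Real.rpow_nonneg hvolm_pos.le _)
    _ = (((Lam d).withDensity (fun x => f x ^ s)) (dyadicCube d m k')).toReal ^ (1/s)
          * (((2:ℝ) ^ m)⁻¹ ^ d) ^ (1 - 1/s + r / (d:ℝ)) := by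
        rw [mul_assoc, ← Real.rpow_add hvolm_pos]
    _ ≤ (((Lam d).withDensity (fun x => f x ^ s)) (dyadicCube d n k)).toReal ^ (1/s)
          * (((2:ℝ) ^ n)⁻¹ ^ d) ^ (1 - 1/s + r / (d:ℝ)) := by
        apply mul_le_mul
        · exact Real.rpow_le_rpow ENNReal.toReal_nonneg hmono_mus (by positivity)
        · exact Real.rpow_le_rpow hvolm_pos.le hmono_vol hc'
        · exact Real.rpow_nonneg hvolm_pos.le _
        · exact Real.rpow_nonneg ENNReal.toReal_nonneg _

lemma Jf_le (hd : 0 < d) (f : Ed d → ℝ≥0∞) (hf : Measurable f) {s : ℝ} (hs : 1 ≤ s)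
    (hfs : (∫⁻ x, f x ^ s ∂Lam d) < ⊤) {r : ℝ} (hr : (d:ℝ) / s - d ≤ r)
    {n : ℕ} {k : Fin d → ℤ} (hk : k ∈ idx d n) :
    Jf d ((Lam d).withDensity f) r (dyadicCube d n k)
      ≤ ((((Lam d).withDensity (fun x => f x ^ s)) (dyadicCube d n k)).toReal) ^ (1/s)
          * (((2:ℝ) ^ n)⁻¹ ^ d) ^ (1 - 1/s + r / (d:ℝ)) := by
  rw [Jf_eq_sSup]
  exact csSup_le ⟨_, Jset_nonempty hk _ r⟩ (Jset_elem_le hd f hf hs hfs hr hk)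

lemma Jf_ge (hd : 0 < d) (f : Ed d → ℝ≥0∞) (hf : Measurable f) {s : ℝ} (hs : 1 ≤ s)
    (hfs : (∫⁻ x, f x ^ s ∂Lam d) < ⊤) {r : ℝ} (hr : (d:ℝ) / s - d ≤ r)
    {n : ℕ} {k : Fin d → ℤ} (hk : k ∈ idx d n) :
    ((((Lam d).withDensity f) (dyadicCube d n k)).toReal)
        * (((2:ℝ) ^ n)⁻¹ ^ d) ^ (r / (d:ℝ))
      ≤ Jf d ((Lam d).withDensity f) r (dyadicCube d n k) := by
  rw [Jf_eq_sSup]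
  have hmem := Jset_nonempty hk ((Lam d).withDensity f) r
  rw [vol_toReal hk] at hmem
  exact le_csSup ⟨_, Jset_elem_le hd f hf hs hfs hr hk⟩ hmem

lemma Jf_nonneg (hd : 0 < d) (f : Ed d → ℝ≥0∞) (hf : Measurable f) {s : ℝ} (hs : 1 ≤ s)
    (hfs : (∫⁻ x, f x ^ s ∂Lam d) < ⊤) {r : ℝ} (hr : (d:ℝ) / s - d ≤ r)
    {n : ℕ} {k : Fin d → ℤ} (hk : k ∈ idx d n) :
    0 ≤ Jf d ((Lam d).withDensity f) r (dyadicCube d n k) := by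
  refine le_trans ?_ (Jf_ge hd f hf hs hfs hr hk)
  positivity

lemma Jf_pos_iff (hd : 0 < d) (f : Ed d → ℝ≥0∞) (hf : Measurable f) {s : ℝ} (hs : 1 ≤ s)
    (hfs : (∫⁻ x, f x ^ s ∂Lam d) < ⊤) {r : ℝ} (hr : (d:ℝ) / s - d ≤ r)
    {n : ℕ} {k : Fin d → ℤ} (hk : k ∈ idx d n) :
    (0 < Jf d ((Lam d).withDensity f) r (dyadicCube d n k)
      ↔ 0 < ((Lam d).withDensity f) (dyadicCube d n k)) := by
  constructor
  · intro hJ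
    rcases eq_or_lt_of_le (show (0:ℝ≥0∞) ≤ ((Lam d).withDensity f) (dyadicCube d n k) from zero_le) with h | h
    · exfalso
      have hzero : Jf d ((Lam d).withDensity f) r (dyadicCube d n k) = 0 := by
        rw [Jf_eq_sSup]
        have hset : Jset ((Lam d).withDensity f) r (dyadicCube d n k) = {0} := by
          apply Set.Subset.antisymm
          · rintro v ⟨Q', hQ', hsub, rfl⟩
            have : ((Lam d).withDensity f) Q' = 0 := by
              have := measure_mono (μ := (Lam d).withDensity f) hsub
              rw [← h] at this
              exact le_antisymm this zero_le
            simp [this]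
          · rintro v rfl
            have := Jset_nonempty hk ((Lam d).withDensity f) r
            rwa [← h, ENNReal.toReal_zero, zero_mul] at this
        rw [hset, csSup_singleton]
      rw [hzero] at hJ
      exact lt_irrefl 0 hJ
    · exact h
  · intro hν
    have hν_fin := nu_univ_ne_top f hf hs hfs
    have htR : 0 < (((Lam d).withDensity f) (dyadicCube d n k)).toReal :=
      ENNReal.toReal_pos hν.ne'
        (ne_top_of_le_ne_top hν_fin (measure_mono (Set.subset_univ _)))
    calc (0:ℝ) < (((Lam d).withDensity f) (dyadicCube d n k)).toReal
          * (((2:ℝ) ^ n)⁻¹ ^ d) ^ (r / (d:ℝ)) := by positivity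
      _ ≤ _ := Jf_ge hd f hf hs hfs hr hk

end LqAux


namespace LqAux

variable {d : ℕ}

lemma TJ_filter_congr (hd : 0 < d) (f : Ed d → ℝ≥0∞) (hf : Measurable f) {s : ℝ} (hs : 1 ≤ s)
    (hfs : (∫⁻ x, f x ^ s ∂Lam d) < ⊤) {r : ℝ} (hr : (d:ℝ) / s - d ≤ r) (n : ℕ) :
    (idx d n).filter
        (fun k => 0 < Jf d ((Lam d).withDensity f) r (dyadicCube d n k))
      = (idx d n).filter
        (fun k => 0 < ((Lam d).withDensity f) (dyadicCube d n k)) := by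
  apply Finset.filter_congr
  intro k hk
  simp only [Jf_pos_iff hd f hf hs hfs hr hk]

/-- Upper bound for the `J`-partition sum, `0 < q ≤ s`. -/
lemma TJ_upper (hd : 0 < d) (f : Ed d → ℝ≥0∞) (hf : Measurable f) {s : ℝ} (hs : 1 ≤ s)
    (hfs : (∫⁻ x, f x ^ s ∂Lam d) < ⊤) {r : ℝ} (hr : (d:ℝ) / s - d ≤ r)
    {q : ℝ} (hq0 : 0 < q) (hqs : q ≤ s) (n : ℕ) :
    ∑ k ∈ (idx d n).filter
        (fun k => 0 < Jf d ((Lam d).withDensity f) r (dyadicCube d n k)),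
        (Jf d ((Lam d).withDensity f) r (dyadicCube d n k)) ^ q
      ≤ (∫⁻ x, f x ^ s ∂Lam d).toReal ^ (q/s)
        * ((2:ℝ) ^ (n * d)) ^ ((1 - q) - (r / (d:ℝ)) * q) := by
  have hs0 : (0:ℝ) < s := lt_of_lt_of_le one_pos hs
  set X : ℝ := (2:ℝ) ^ (n * d) with hXdef
  have hX : (0:ℝ) < X := by positivity
  set BsR : ℝ := (∫⁻ x, f x ^ s ∂Lam d).toReal with hBsRdef
  set μs : Measure (Ed d) := (Lam d).withDensity (fun x => f x ^ s) with hμsdef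
  have hμs_univ : μs Set.univ = ∫⁻ x, f x ^ s ∂Lam d := by
    rw [hμsdef, withDensity_apply _ MeasurableSet.univ, Measure.restrict_univ]
  set b : (Fin d → ℤ) → ℝ := fun k => (μs (dyadicCube d n k)).toReal with hbdef
  have hb_nonneg : ∀ k, 0 ≤ b k := fun k => ENNReal.toReal_nonneg
  set t : ℝ := (1/s) * q with htdef
  have ht0 : 0 < t := by positivity
  have ht1 : t ≤ 1 := by
    rw [htdef, one_div, inv_mul_le_iff₀ hs0, mul_one]
    exact hqs
  set c' : ℝ := 1 - 1/s + r / (d:ℝ) with hc'def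
  have hJ_nonneg : ∀ k ∈ idx d n,
      0 ≤ Jf d ((Lam d).withDensity f) r (dyadicCube d n k) :=
    fun k hk => Jf_nonneg hd f hf hs hfs hr hk
  have hsub : ∑ k ∈ (idx d n).filter
        (fun k => 0 < Jf d ((Lam d).withDensity f) r (dyadicCube d n k)),
        (Jf d ((Lam d).withDensity f) r (dyadicCube d n k)) ^ q
      ≤ ∑ k ∈ idx d n, (Jf d ((Lam d).withDensity f) r (dyadicCube d n k)) ^ q := by
    apply Finset.sum_le_sum_of_subset_of_nonneg (Finset.filter_subset _ _)
    intro k hk _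
    exact Real.rpow_nonneg (hJ_nonneg k hk) q
  have hterm : ∀ k ∈ idx d n,
      (Jf d ((Lam d).withDensity f) r (dyadicCube d n k)) ^ q
        ≤ b k ^ t * (((2:ℝ) ^ n)⁻¹ ^ d) ^ (c' * q) := by
    intro k hk
    calc (Jf d ((Lam d).withDensity f) r (dyadicCube d n k)) ^ q
        ≤ (b k ^ (1/s) * (((2:ℝ) ^ n)⁻¹ ^ d) ^ c') ^ q :=
          Real.rpow_le_rpow (hJ_nonneg k hk) (Jf_le hd f hf hs hfs hr hk) hq0.le
      _ = b k ^ t * (((2:ℝ) ^ n)⁻¹ ^ d) ^ (c' * q) := by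
          rw [Real.mul_rpow (Real.rpow_nonneg (hb_nonneg k) _)
              (Real.rpow_nonneg (by positivity) _),
            ← Real.rpow_mul (hb_nonneg k), ← Real.rpow_mul (by positivity)]
  have hsum2 : ∑ k ∈ idx d n, (Jf d ((Lam d).withDensity f) r (dyadicCube d n k)) ^ q
      ≤ (∑ k ∈ idx d n, b k ^ t) * (((2:ℝ) ^ n)⁻¹ ^ d) ^ (c' * q) := by
    rw [Finset.sum_mul]
    exact Finset.sum_le_sum hterm
  have hbsum : ∑ k ∈ idx d n, b k = BsR := by
    rw [hbdef, hBsRdef, ← hμs_univ]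
    exact sum_toReal_cubes _ (by rw [hμs_univ]; exact hfs.ne) n
  have hpm : ∑ k ∈ idx d n, b k ^ t ≤ X ^ (1 - t) * BsR ^ t := by
    have := pm_concave (F := idx d n) (a := b) hb_nonneg ht0 ht1
    rwa [card_idx_cast, hbsum] at this
  have hXe : ∀ e : ℝ, ((((2:ℝ) ^ n)⁻¹ ^ d : ℝ)) ^ e = X ^ (-e) := by
    intro e
    rw [vol_eq_X, ← hXdef, Real.inv_rpow hX.le, ← Real.rpow_neg hX.le]
  have hfinal : X ^ (1 - t) * BsR ^ t * (((2:ℝ) ^ n)⁻¹ ^ d) ^ (c' * q)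
      = BsR ^ (q/s) * X ^ ((1 - q) - (r / (d:ℝ)) * q) := by
    rw [hXe]
    calc X ^ (1 - t) * BsR ^ t * X ^ (-(c' * q))
        = BsR ^ t * (X ^ (1 - t) * X ^ (-(c' * q))) := by ring
      _ = BsR ^ t * X ^ ((1 - t) + -(c' * q)) := by rw [← Real.rpow_add hX]
      _ = BsR ^ (q/s) * X ^ ((1 - q) - (r / (d:ℝ)) * q) := by
          rw [show t = q/s by rw [htdef]; ring,
            show (1 - q/s) + -(c' * q) = (1 - q) - (r / (d:ℝ)) * q by
              rw [hc'def]; ring]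
  calc ∑ k ∈ (idx d n).filter
        (fun k => 0 < Jf d ((Lam d).withDensity f) r (dyadicCube d n k)),
        (Jf d ((Lam d).withDensity f) r (dyadicCube d n k)) ^ q
      ≤ ∑ k ∈ idx d n, (Jf d ((Lam d).withDensity f) r (dyadicCube d n k)) ^ q := hsub
    _ ≤ (∑ k ∈ idx d n, b k ^ t) * (((2:ℝ) ^ n)⁻¹ ^ d) ^ (c' * q) := hsum2
    _ ≤ (X ^ (1 - t) * BsR ^ t) * (((2:ℝ) ^ n)⁻¹ ^ d) ^ (c' * q) :=
        mul_le_mul_of_nonneg_right hpm (by positivity)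
    _ = BsR ^ (q/s) * X ^ ((1 - q) - (r / (d:ℝ)) * q) := hfinal

/-- Lower bound for the `J`-partition sum. -/
lemma TJ_lower (hd : 0 < d) (f : Ed d → ℝ≥0∞) (hf : Measurable f) {s : ℝ} (hs : 1 ≤ s)
    (hfs : (∫⁻ x, f x ^ s ∂Lam d) < ⊤) (hne : (Lam d).withDensity f ≠ 0)
    {r : ℝ} (hr : (d:ℝ) / s - d ≤ r) {q : ℝ} (hq0 : 0 ≤ q) (hqs : q ≤ s) :
    ∃ c : ℝ, 0 < c ∧ ∀ n : ℕ,
      c * ((2:ℝ) ^ (n * d)) ^ ((1 - q) - (r / (d:ℝ)) * q)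
        ≤ ∑ k ∈ (idx d n).filter
            (fun k => 0 < Jf d ((Lam d).withDensity f) r (dyadicCube d n k)),
            (Jf d ((Lam d).withDensity f) r (dyadicCube d n k)) ^ q := by
  obtain ⟨c, C, hc, hβ⟩ := Sb_bounds hd f hf hs hfs hne hq0 hqs
  refine ⟨c, hc, fun n => ?_⟩
  set X : ℝ := (2:ℝ) ^ (n * d) with hXdef
  have hX : (0:ℝ) < X := by positivity
  have hXe : ∀ e : ℝ, ((((2:ℝ) ^ n)⁻¹ ^ d : ℝ)) ^ e = X ^ (-e) := by
    intro e
    rw [vol_eq_X, ← hXdef, Real.inv_rpow hX.le, ← Real.rpow_neg hX.le]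
  rw [TJ_filter_congr hd f hf hs hfs hr n]
  rcases eq_or_lt_of_le hq0 with rfl | hq0'
  · -- q = 0 : both sides are counts
    have h1 := (hβ n).1
    simp only [Real.rpow_zero] at h1 ⊢
    calc c * X ^ ((1 - (0:ℝ)) - (r / (d:ℝ)) * 0)
        = c * X ^ (1 - (0:ℝ)) := by norm_num
      _ ≤ _ := h1
  · have hterm : ∀ k ∈ (idx d n).filter
        (fun k => 0 < ((Lam d).withDensity f) (dyadicCube d n k)),
        ((((Lam d).withDensity f) (dyadicCube d n k)).toReal) ^ q
            * (((2:ℝ) ^ n)⁻¹ ^ d) ^ ((r / (d:ℝ)) * q)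
          ≤ (Jf d ((Lam d).withDensity f) r (dyadicCube d n k)) ^ q := by
      intro k hk
      have hkidx : k ∈ idx d n := Finset.mem_of_mem_filter k hk
      calc ((((Lam d).withDensity f) (dyadicCube d n k)).toReal) ^ q
            * (((2:ℝ) ^ n)⁻¹ ^ d) ^ ((r / (d:ℝ)) * q)
          = ((((Lam d).withDensity f) (dyadicCube d n k)).toReal
              * (((2:ℝ) ^ n)⁻¹ ^ d) ^ (r / (d:ℝ))) ^ q := by
            rw [Real.mul_rpow ENNReal.toReal_nonneg (Real.rpow_nonneg (by positivity) _),
              ← Real.rpow_mul (by positivity : (0:ℝ) ≤ ((2:ℝ) ^ n)⁻¹ ^ d)]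
        _ ≤ (Jf d ((Lam d).withDensity f) r (dyadicCube d n k)) ^ q :=
            Real.rpow_le_rpow (by positivity) (Jf_ge hd f hf hs hfs hr hkidx) hq0'.le
    have hsum : (∑ k ∈ (idx d n).filter
          (fun k => 0 < ((Lam d).withDensity f) (dyadicCube d n k)),
          ((((Lam d).withDensity f) (dyadicCube d n k)).toReal) ^ q)
            * (((2:ℝ) ^ n)⁻¹ ^ d) ^ ((r / (d:ℝ)) * q)
        ≤ ∑ k ∈ (idx d n).filter
            (fun k => 0 < ((Lam d).withDensity f) (dyadicCube d n k)),
            (Jf d ((Lam d).withDensity f) r (dyadicCube d n k)) ^ q := by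
      rw [Finset.sum_mul]
      exact Finset.sum_le_sum hterm
    have h1 := (hβ n).1
    calc c * X ^ ((1 - q) - (r / (d:ℝ)) * q)
        = (c * X ^ (1 - q)) * X ^ (-((r / (d:ℝ)) * q)) := by
          rw [mul_assoc, ← Real.rpow_add hX]
          congr 2
      _ ≤ (∑ k ∈ (idx d n).filter
            (fun k => 0 < ((Lam d).withDensity f) (dyadicCube d n k)),
            ((((Lam d).withDensity f) (dyadicCube d n k)).toReal) ^ q)
            * X ^ (-((r / (d:ℝ)) * q)) :=
          mul_le_mul_of_nonneg_right h1 (Real.rpow_nonneg hX.le _)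
      _ = (∑ k ∈ (idx d n).filter
            (fun k => 0 < ((Lam d).withDensity f) (dyadicCube d n k)),
            ((((Lam d).withDensity f) (dyadicCube d n k)).toReal) ^ q)
            * (((2:ℝ) ^ n)⁻¹ ^ d) ^ ((r / (d:ℝ)) * q) := by rw [hXe]
      _ ≤ _ := hsum

/-- The sequence `τ_{J,n}(q)` converges to `d(1-q) - rq`. -/
lemma tauN_tendsto (hd : 0 < d) (f : Ed d → ℝ≥0∞) (hf : Measurable f) {s : ℝ} (hs : 1 ≤ s)
    (hfs : (∫⁻ x, f x ^ s ∂Lam d) < ⊤) (ν : Measure (Ed d))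
    (hν : ν = (Lam d).withDensity f) (hne : ν ≠ 0)
    {r : ℝ} (hr : (d:ℝ) / s - d ≤ r) {q : ℝ} (hq0 : 0 ≤ q) (hqs : q ≤ s) :
    Tendsto (tauN d ν r q) atTop (𝓝 ((d:ℝ) * (1 - q) - r * q)) := by
  subst hν
  have hd0 : (0:ℝ) < (d:ℝ) := by exact_mod_cast hd
  obtain ⟨c, hc, hlow⟩ := TJ_lower hd f hf hs hfs hne hr hq0 hqs
  have hE : ∀ n : ℕ, ((2:ℝ) ^ (n * d)) ^ ((1 - q) - (r / (d:ℝ)) * q)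
      = (2:ℝ) ^ ((n:ℝ) * ((d:ℝ) * (1 - q) - r * q)) := by
    intro n
    rw [pow_rpow_conv n _]
    congr 1
    have heq : (d:ℝ) * ((1 - q) - r / (d:ℝ) * q) = (d:ℝ) * (1 - q) - r * q := by
      field_simp
    rw [heq]
  rcases eq_or_lt_of_le hq0 with rfl | hq0'
  · -- q = 0
    apply tendsto_log_div hc (C := 1)
    · intro n
      rw [← hE n]
      exact hlow n
    · intro n
      have hcount : ∑ k ∈ (idx d n).filter
          (fun k => 0 < Jf d ((Lam d).withDensity f) r (dyadicCube d n k)),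
          (Jf d ((Lam d).withDensity f) r (dyadicCube d n k)) ^ (0:ℝ)
          = (((idx d n).filter
            (fun k => 0 < Jf d ((Lam d).withDensity f) r (dyadicCube d n k))).card : ℝ) := by
        rw [Finset.sum_congr rfl (fun k _ => Real.rpow_zero _), Finset.sum_const,
          nsmul_eq_mul, mul_one]
      rw [one_mul, hcount]
      have h2 : (2:ℝ) ^ ((n:ℝ) * ((d:ℝ) * (1 - (0:ℝ)) - r * 0)) = (2:ℝ) ^ (n * d) := by
        rw [show (n:ℝ) * ((d:ℝ) * (1 - (0:ℝ)) - r * 0) = (n:ℝ) * ((d:ℝ) * 1) by ring,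
          ← pow_rpow_conv n 1, Real.rpow_one]
      rw [h2, ← card_idx_cast n]
      exact_mod_cast Finset.card_filter_le _ _
  · -- q > 0
    apply tendsto_log_div hc (C := (∫⁻ x, f x ^ s ∂Lam d).toReal ^ (q/s))
    · intro n
      rw [← hE n]
      exact hlow n
    · intro n
      rw [← hE n]
      exact TJ_upper hd f hf hs hfs hr hq0' hqs n

end LqAux


/-- for a nonzero finite absolutely continuous measure `ν = fΛ` on `𝒬` with
density `f ∈ L^s(Λ)`, `s ≥ 1`, the `L^q`-spectrum exists as a limit and is linear on
`[0,s]`: `β_ν(q) = d(1-q)`; moreover `τ_{J_{ν,r}}(q) = d(1-q) - rq` for `r ≥ d/s - d`. -/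
theorem Lq_spectrum_absolutely_continuous
    (d : ℕ) (hd : 0 < d) (f : Ed d → ℝ≥0∞) (hf : Measurable f)
    (s : ℝ) (hs : 1 ≤ s) (hfs : (∫⁻ x, f x ^ s ∂Lam d) < ⊤)
    (ν : Measure (Ed d)) (hν : ν = (Lam d).withDensity f)
    (hne : ν ≠ 0) [IsFiniteMeasure ν] :
    (∀ q ∈ Set.Icc (0:ℝ) s,
      liminf (betaN d ν q) atTop = (d:ℝ) * (1 - q) ∧
      betaNu d ν q = (d:ℝ) * (1 - q)) ∧
    (∀ r : ℝ, (d:ℝ) / s - d ≤ r → ∀ q ∈ Set.Icc (0:ℝ) s,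
      tauJ d ν r q = (d:ℝ) * (1 - q) - r * q) := by
  constructor
  · intro q hq
    have ht := LqAux.betaN_tendsto hd f hf hs hfs ν hν hne hq.1 hq.2
    exact ⟨ht.liminf_eq, ht.limsup_eq⟩
  · intro r hr q hq
    exact (LqAux.tauN_tendsto hd f hf hs hfs ν hν hne hr hq.1 hq.2).limsup_eq
end
end
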